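/- arXiv:2107.09057 — 5 statements merged into one kernel-verified Lean document; each statement's English description precedes it below -/
import Mathlib

section
/- Quantum Wigderson-Wigderson (primary) uncertainty principle, commutative finite-dimensional case: if k > 0 and F is a k-transform, then for every x : Fin n → ℂ one has ‖x‖_{1,d} * ‖F x‖_{1,τ} ≥ k * ‖x‖_∞ * ‖F x‖_∞. -/
open Finset

/-- Weighted `p`-norm on `Fin n → ℂ` with weight `d`. -/
noncomputable def wnorm {n : ℕ} (d : Fin n → ℝ) (p : ℝ) (x : Fin n → ℂ) : ℝ :=
  (∑ i, d i * ‖x i‖ ^ p) ^ (1 / p)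

/-- Sup (infinity) norm on `Fin n → ℂ`. -/
noncomputable def inorm {n : ℕ} (x : Fin n → ℂ) : ℝ :=
  ⨆ i, ‖x i‖

/-- `G` is the adjoint of `F` with respect to the weighted inner products with
weights `d` and `τ`. -/
def IsAdjointPair {n m : ℕ} (d : Fin n → ℝ) (τ : Fin m → ℝ)
    (F : (Fin n → ℂ) →ₗ[ℂ] (Fin m → ℂ)) (G : (Fin m → ℂ) →ₗ[ℂ] (Fin n → ℂ)) : Prop :=
  ∀ (x : Fin n → ℂ) (u : Fin m → ℂ),
    ∑ j, (τ j : ℂ) * (starRingEnd ℂ) (F x j) * u j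
      = ∑ i, (d i : ℂ) * (starRingEnd ℂ) (x i) * G u i

lemma wnorm_one {n : ℕ} (d : Fin n → ℝ) (x : Fin n → ℂ) :
    wnorm d 1 x = ∑ i, d i * ‖x i‖ := by
  simp [wnorm]

lemma inorm_nonneg {n : ℕ} (x : Fin n → ℂ) : 0 ≤ inorm x :=
  Real.iSup_nonneg fun i => (norm_nonneg _)

lemma le_inorm {n : ℕ} (x : Fin n → ℂ) (i : Fin n) : ‖x i‖ ≤ inorm x :=
  le_ciSup (f := fun i => ‖x i‖) (Set.Finite.bddAbove (Set.finite_range _)) i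

lemma wnorm_one_nonneg {n : ℕ} (d : Fin n → ℝ) (hd : ∀ i, 0 < d i) (x : Fin n → ℂ) :
    0 ≤ wnorm d 1 x := by
  rw [wnorm_one]
  exact Finset.sum_nonneg fun i _ => mul_nonneg (hd i).le (norm_nonneg _)

/-- Quantum Wigderson-Wigderson (primary) uncertainty principle,
commutative finite-dimensional case. -/
theorem quantum_WW_primary_uncertainty {n m : ℕ} (hn : 0 < n) (hm : 0 < m)
    (d : Fin n → ℝ) (τ : Fin m → ℝ) (hd : ∀ i, 0 < d i) (hτ : ∀ j, 0 < τ j)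
    (k : ℝ) (hk : 0 < k)
    (F : (Fin n → ℂ) →ₗ[ℂ] (Fin m → ℂ)) (G : (Fin m → ℂ) →ₗ[ℂ] (Fin n → ℂ))
    (hadj : IsAdjointPair d τ F G)
    (hF1 : ∀ x, inorm (F x) ≤ wnorm d 1 x)
    (hFk : ∀ x, k * inorm x ≤ inorm (G (F x)))
    (x : Fin n → ℂ) :
    wnorm d 1 x * wnorm τ 1 (F x) ≥ k * inorm x * inorm (F x) := by
  have hGbound : ∀ (u : Fin m → ℂ) (i : Fin n), ‖G u i‖ ≤ wnorm τ 1 u := by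
    intro u i
    have h := hadj ((Pi.single i 1 : Fin n → ℂ)) u
    have hrhs : ∑ i', (d i' : ℂ) * (starRingEnd ℂ) ((Pi.single i 1 : Fin n → ℂ) i') * G u i'
        = (d i : ℂ) * G u i := by
      rw [Finset.sum_eq_single i]
      · simp
      · intro b _ hb
        simp [Pi.single_apply, hb]
      · simp
    rw [hrhs] at h
    have hsingle : wnorm d 1 ((Pi.single i 1 : Fin n → ℂ)) = d i := by
      rw [wnorm_one, Finset.sum_eq_single i]
      · simp
      · intro b _ hb
        simp [Pi.single_apply, hb]
      · simp
    have hFs : ∀ j, ‖F ((Pi.single i 1 : Fin n → ℂ)) j‖ ≤ d i := by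
      intro j
      calc ‖F ((Pi.single i 1 : Fin n → ℂ)) j‖ ≤ inorm (F ((Pi.single i 1 : Fin n → ℂ))) := le_inorm _ j
        _ ≤ wnorm d 1 ((Pi.single i 1 : Fin n → ℂ)) := hF1 _
        _ = d i := hsingle
    have hLHS : ‖∑ j, (τ j : ℂ) * (starRingEnd ℂ) (F ((Pi.single i 1 : Fin n → ℂ)) j) * u j‖
        ≤ d i * wnorm τ 1 u := by
      calc ‖∑ j, (τ j : ℂ) * (starRingEnd ℂ) (F ((Pi.single i 1 : Fin n → ℂ)) j) * u j‖
          ≤ ∑ j, ‖(τ j : ℂ) * (starRingEnd ℂ) (F ((Pi.single i 1 : Fin n → ℂ)) j) * u j‖ :=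
            norm_sum_le _ _
        _ ≤ ∑ j, τ j * (d i * ‖u j‖) := by
            apply Finset.sum_le_sum
            intro j _
            rw [norm_mul, norm_mul, Complex.norm_real, Real.norm_eq_abs, Complex.norm_conj,
              abs_of_pos (hτ j), mul_assoc]
            exact mul_le_mul_of_nonneg_left
              (mul_le_mul_of_nonneg_right (hFs j) (norm_nonneg _)) (hτ j).le
        _ = d i * ∑ j, τ j * ‖u j‖ := by
            rw [Finset.mul_sum]; exact Finset.sum_congr rfl fun j _ => by ring
        _ = d i * wnorm τ 1 u := by rw [wnorm_one]
    have h2 : d i * ‖G u i‖ ≤ d i * wnorm τ 1 u := by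
      calc d i * ‖G u i‖ = ‖(d i : ℂ) * G u i‖ := by
            rw [norm_mul, Complex.norm_real, Real.norm_eq_abs, abs_of_pos (hd i)]
        _ = ‖∑ j, (τ j : ℂ) * (starRingEnd ℂ) (F ((Pi.single i 1 : Fin n → ℂ)) j) * u j‖ := by
            rw [h]
        _ ≤ d i * wnorm τ 1 u := hLHS
    exact le_of_mul_le_mul_left h2 (hd i)
  have hkey : k * inorm x ≤ wnorm τ 1 (F x) := by
    calc k * inorm x ≤ inorm (G (F x)) := hFk x
      _ ≤ wnorm τ 1 (F x) := by
          haveI : Nonempty (Fin n) := ⟨⟨0, hn⟩⟩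
          exact ciSup_le fun i => hGbound (F x) i
  calc k * inorm x * inorm (F x) ≤ wnorm τ 1 (F x) * wnorm d 1 x :=
        mul_le_mul hkey (hF1 x) (inorm_nonneg _) (wnorm_one_nonneg τ hτ _)
    _ = wnorm d 1 x * wnorm τ 1 (F x) := mul_comm _ _
end

section
/- Comparison of smooth supports, commutative finite-dimensional case: for every nonzero x : Fin n → ℂ, every ε ∈ [0,1] and every real 1 ≤ p < ∞, one has S_ε^{p,d}(x) ≤ f₁(ε,p,x), and f₁(ε,p,x) = f₃(ε,p,x), where f₁(ε,p,x) = inf { S_d(y) : y : Fin n → ℂ, ‖x − y‖_{p,d} ≤ ε * ‖x‖_{p,d} } and f₃(ε,p,x) = inf { ∑ over i ∈ T with x i ≠ 0 of d i : T is a subset of Fin n with ‖(fun i => if i ∈ T then 0 else x i)‖_{p,d} ≤ ε * ‖x‖_{p,d} }. -/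
open Finset

/-- Weighted support of `x`: sum of the weights over the set where `x` is nonzero. -/
noncomputable def wsupp {n : ℕ} (d : Fin n → ℝ) (x : Fin n → ℂ) : ℝ :=
  ∑ i, if x i = 0 then 0 else d i

/-- The `(p, ε)` smooth support of `x` with respect to the weight `d`. -/
noncomputable def smoothSupp {n : ℕ} (d : Fin n → ℝ) (p ε : ℝ) (x : Fin n → ℂ) : ℝ :=
  sInf { s : ℝ | ∃ h : Fin n → ℝ, (∀ i, 0 ≤ h i) ∧ (∀ i, h i ≤ 1) ∧
    wnorm d p (fun i => ((1 - h i : ℝ) : ℂ) * x i) ≤ ε * wnorm d p x ∧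
    s = ∑ i, if x i = 0 then 0 else d i * h i }

/-- The smooth support variant `f₁`: infimum of supports of `y` approximating `x`. -/
noncomputable def fOne {n : ℕ} (d : Fin n → ℝ) (p ε : ℝ) (x : Fin n → ℂ) : ℝ :=
  sInf { s : ℝ | ∃ y : Fin n → ℂ, wnorm d p (x - y) ≤ ε * wnorm d p x ∧ s = wsupp d y }

/-- The smooth support variant `f₃`: infimum over (sub)sets `T` (i.e. projections). -/
noncomputable def fThree {n : ℕ} (d : Fin n → ℝ) (p ε : ℝ) (x : Fin n → ℂ) : ℝ :=
  sInf { s : ℝ | ∃ T : Finset (Fin n),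
    wnorm d p (fun i => if i ∈ T then 0 else x i) ≤ ε * wnorm d p x ∧
    s = ∑ i ∈ T, if x i = 0 then 0 else d i }

lemma wnorm_nonneg {n : ℕ} (d : Fin n → ℝ) (hd : ∀ i, 0 ≤ d i) (p : ℝ) (x : Fin n → ℂ) :
    0 ≤ wnorm d p x := by
  apply Real.rpow_nonneg
  exact Finset.sum_nonneg fun i _ => mul_nonneg (hd i) (Real.rpow_nonneg (norm_nonneg _) _)

lemma wnorm_mono {n : ℕ} (d : Fin n → ℝ) (hd : ∀ i, 0 ≤ d i) {p : ℝ} (hp : 0 < p)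
    {u v : Fin n → ℂ} (h : ∀ i, ‖u i‖ ≤ ‖v i‖) :
    wnorm d p u ≤ wnorm d p v := by
  apply Real.rpow_le_rpow
  · exact Finset.sum_nonneg fun i _ => mul_nonneg (hd i) (Real.rpow_nonneg (norm_nonneg _) _)
  · exact Finset.sum_le_sum fun i _ => mul_le_mul_of_nonneg_left
      (Real.rpow_le_rpow (norm_nonneg _) (h i) hp.le) (hd i)
  · positivity

/-- Comparison of smooth supports, commutative finite-dimensional case. -/
theorem smooth_support_comparison {n : ℕ} (hn : 0 < n)
    (d : Fin n → ℝ) (hd : ∀ i, 0 < d i)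
    (x : Fin n → ℂ) (hx : x ≠ 0) (ε p : ℝ) (hε : ε ∈ Set.Icc (0:ℝ) 1) (hp : 1 ≤ p) :
    smoothSupp d p ε x ≤ fOne d p ε x ∧ fOne d p ε x = fThree d p ε x := by
  classical
  have hp0 : (0:ℝ) < p := lt_of_lt_of_le one_pos hp
  have hd' : ∀ i, (0:ℝ) ≤ d i := fun i => (hd i).le
  have hεw : 0 ≤ ε * wnorm d p x := mul_nonneg hε.1 (wnorm_nonneg d hd' p x)
  have hzero : ∀ u : Fin n → ℂ, (∀ i, u i = 0) → wnorm d p u = 0 := by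
    intro u hu
    have : ∀ i, d i * ‖u i‖ ^ p = 0 := by
      intro i; rw [hu i]; simp [Real.zero_rpow hp0.ne']
    unfold wnorm
    rw [Finset.sum_congr rfl fun i _ => this i, Finset.sum_const, smul_zero]
    exact Real.zero_rpow (by positivity)
  -- bddBelow facts
  have bddS : BddBelow { s : ℝ | ∃ h : Fin n → ℝ, (∀ i, 0 ≤ h i) ∧ (∀ i, h i ≤ 1) ∧
      wnorm d p (fun i => ((1 - h i : ℝ) : ℂ) * x i) ≤ ε * wnorm d p x ∧
      s = ∑ i, if x i = 0 then 0 else d i * h i } := by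
    refine ⟨0, ?_⟩
    rintro s ⟨h, h0, _, _, rfl⟩
    apply Finset.sum_nonneg
    intro i _
    split
    · exact le_refl 0
    · exact mul_nonneg (hd' i) (h0 i)
  have bdd1 : BddBelow { s : ℝ | ∃ y : Fin n → ℂ,
      wnorm d p (x - y) ≤ ε * wnorm d p x ∧ s = wsupp d y } := by
    refine ⟨0, ?_⟩
    rintro s ⟨y, _, rfl⟩
    apply Finset.sum_nonneg
    intro i _; split
    · exact le_refl 0
    · exact hd' i
  have bdd3 : BddBelow { s : ℝ | ∃ T : Finset (Fin n),
      wnorm d p (fun i => if i ∈ T then 0 else x i) ≤ ε * wnorm d p x ∧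
      s = ∑ i ∈ T, if x i = 0 then 0 else d i } := by
    refine ⟨0, ?_⟩
    rintro s ⟨T, _, rfl⟩
    apply Finset.sum_nonneg
    intro i _; split
    · exact le_refl 0
    · exact hd' i
  have hne1 : { s : ℝ | ∃ y : Fin n → ℂ,
      wnorm d p (x - y) ≤ ε * wnorm d p x ∧ s = wsupp d y }.Nonempty := by
    refine ⟨wsupp d x, x, ?_, rfl⟩
    rw [hzero (x - x) (by simp)]
    exact hεw
  constructor
  · -- smoothSupp ≤ fOne
    apply le_csInf hne1
    rintro s ⟨y, hy, rfl⟩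
    set h : Fin n → ℝ := fun i => if y i = 0 then 0 else 1 with hh
    have hmem : (∑ i, if x i = 0 then 0 else d i * h i) ∈
        { s : ℝ | ∃ h : Fin n → ℝ, (∀ i, 0 ≤ h i) ∧ (∀ i, h i ≤ 1) ∧
          wnorm d p (fun i => ((1 - h i : ℝ) : ℂ) * x i) ≤ ε * wnorm d p x ∧
          s = ∑ i, if x i = 0 then 0 else d i * h i } := by
      refine ⟨h, fun i => by simp [hh]; split <;> norm_num,
        fun i => by simp [hh]; split <;> norm_num, ?_, rfl⟩
      refine le_trans (wnorm_mono d hd' hp0 ?_) hy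
      intro i
      simp only [hh, Pi.sub_apply]
      by_cases hyi : y i = 0
      · simp [hyi]
      · simp [hyi]
    refine le_trans (csInf_le bddS hmem) ?_
    unfold wsupp
    apply Finset.sum_le_sum
    intro i _
    by_cases hxi : x i = 0 <;> by_cases hyi : y i = 0 <;> simp [hh, hxi, hyi, hd' i]
  · -- fOne = fThree
    apply le_antisymm
    · -- fOne ≤ fThree
      apply le_csInf
      · refine ⟨∑ i ∈ (Finset.univ : Finset (Fin n)), if x i = 0 then 0 else d i,
          Finset.univ, ?_, rfl⟩
        rw [hzero _ (by intro i; simp)]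
        exact hεw
      rintro s ⟨T, hT, rfl⟩
      set y : Fin n → ℂ := fun i => if i ∈ T then x i else 0 with hy
      have hval : wsupp d y = ∑ i ∈ T, if x i = 0 then 0 else d i := by
        unfold wsupp
        rw [← Finset.sum_subset (Finset.subset_univ T) (by
          intro i _ hiT
          simp [hy, hiT])]
        apply Finset.sum_congr rfl
        intro i hi
        simp [hy, hi]
      apply csInf_le bdd1
      refine ⟨y, ?_, hval.symm⟩
      have : x - y = fun i => if i ∈ T then 0 else x i := by
        funext i
        by_cases hi : i ∈ T <;> simp [hy, hi]
      rw [this]; exact hT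
    · -- fThree ≤ fOne
      apply le_csInf hne1
      rintro s ⟨y, hy, rfl⟩
      set T : Finset (Fin n) := Finset.univ.filter (fun i => y i ≠ 0) with hT
      have hmem : (∑ i ∈ T, if x i = 0 then 0 else d i) ∈
          { s : ℝ | ∃ T : Finset (Fin n),
            wnorm d p (fun i => if i ∈ T then 0 else x i) ≤ ε * wnorm d p x ∧
            s = ∑ i ∈ T, if x i = 0 then 0 else d i } := by
        refine ⟨T, ?_, rfl⟩
        refine le_trans (wnorm_mono d hd' hp0 ?_) hy
        intro i
        by_cases hi : i ∈ T
        · simp [hi]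
        · have hyi : y i = 0 := by
            simpa [hT] using hi
          simp [hi, Pi.sub_apply, hyi]
      refine le_trans (csInf_le bdd3 hmem) ?_
      unfold wsupp
      calc (∑ i ∈ T, if x i = 0 then 0 else d i)
          ≤ ∑ i ∈ T, if y i = 0 then 0 else d i := by
            apply Finset.sum_le_sum
            intro i hi
            have hyi : y i ≠ 0 := by simpa [hT] using hi
            simp only [hyi, if_neg]
            split
            · exact hd' i
            · exact le_refl _
        _ ≤ ∑ i, if y i = 0 then 0 else d i := by
            apply Finset.sum_le_sum_of_subset_of_nonneg (Finset.subset_univ T)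
            intro i _ _
            split
            · exact le_refl 0
            · exact hd' i
end

section
/- Quantum Hausdorff-Young inequality for k-transforms, commutative finite-dimensional case: if k > 0, F is a k-transform, and F* ∘ F = k • id, then for all reals p, q with 2 ≤ p < ∞ and 1/p + 1/q = 1, and any x : Fin n → ℂ, one has ‖F x‖_{p,τ} ≤ k^(1/p) * ‖x‖_{q,d}. -/
open Finset

open Finset Complex HadamardThreeLines in
lemma core_bound {n m : ℕ} (d : Fin n → ℝ) (τ : Fin m → ℝ)
    (hd : ∀ i, 0 ≤ d i) (hτ : ∀ j, 0 ≤ τ j) (k : ℝ) (hk : 0 ≤ k)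
    (F : (Fin n → ℂ) →ₗ[ℂ] (Fin m → ℂ))
    (hF1 : ∀ y j, ‖F y j‖ ≤ ∑ i, d i * ‖y i‖)
    (hF2 : ∀ y, ∑ j, τ j * ‖F y j‖ ^ 2 = k * ∑ i, d i * ‖y i‖ ^ 2)
    (q : ℝ) (hq1 : 1 ≤ q) (hq2 : q ≤ 2) (x : Fin n → ℂ) (u : Fin m → ℂ) :
    ‖∑ j, (τ j : ℂ) * F x j * u j‖ ≤
      k ^ (1 - 1/q) * ((∑ i, d i * ‖x i‖ ^ q) *
        (∑ j, τ j * ‖u j‖ ^ q)) ^ (1/q) := by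
  have hq0 : (0:ℝ) < q := lt_of_lt_of_le one_pos hq1
  set e : ℂ → ℂ := fun z => (↑(q - 1) : ℂ) - (↑(q/2) : ℂ) * z with he
  set X : ℂ → Fin n → ℂ := fun z i => (‖x i‖ : ℂ) ^ (e z) * x i with hX
  set U : ℂ → Fin m → ℂ := fun z j => (‖u j‖ : ℂ) ^ (e z) * u j with hU
  set g : ℂ → ℂ := fun z => ∑ j, (τ j : ℂ) * F (X z) j * U z j with hg
  -- real part of exponent
  have hre : ∀ z : ℂ, (e z).re = q * (1 - z.re/2) - 1 := by
    intro z
    simp [he, Complex.sub_re, Complex.ofReal_re, Complex.re_ofReal_mul]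
    ring
  -- modulus computation
  have hmod : ∀ (v : ℂ) (z : ℂ), z.re ≤ 1 →
      ‖(‖v‖ : ℂ) ^ (e z) * v‖
        = ‖v‖ ^ (q * (1 - z.re/2)) := by
    intro v z hz
    have hepos : 0 < q * (1 - z.re/2) := by nlinarith
    by_cases hv : v = 0
    · simp [hv, Real.zero_rpow (ne_of_gt hepos)]
    · have hv' : 0 < ‖v‖ := norm_pos_iff.mpr hv
      rw [norm_mul, Complex.norm_cpow_eq_rpow_re_of_pos hv', hre]
      rw [← Real.rpow_add_one (ne_of_gt hv')]
      ring_nf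
  -- differentiability of coordinates
  have hXd : ∀ i, Differentiable ℂ (fun z => X z i) := by
    intro i
    by_cases hv : x i = 0
    · simp only [hX, hv, mul_zero]
      exact differentiable_const 0
    · have hb : (‖x i‖ : ℂ) ≠ 0 := by
        simpa using norm_ne_zero_iff.mpr hv
      have hed : Differentiable ℂ e := by
        exact (differentiable_const _).sub ((differentiable_const _).mul differentiable_id)
      exact (hed.const_cpow (Or.inl hb)).mul (differentiable_const _)
  have hUd : ∀ j, Differentiable ℂ (fun z => U z j) := by
    intro j
    by_cases hv : u j = 0
    · simp only [hU, hv, mul_zero]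
      exact differentiable_const 0
    · have hb : (‖u j‖ : ℂ) ≠ 0 := by
        simpa using norm_ne_zero_iff.mpr hv
      have hed : Differentiable ℂ e := by
        exact (differentiable_const _).sub ((differentiable_const _).mul differentiable_id)
      exact (hed.const_cpow (Or.inl hb)).mul (differentiable_const _)
  have hFX : ∀ (z : ℂ) (j : Fin m), F (X z) j
      = ∑ i, X z i * F (fun j' => if i = j' then 1 else 0) j := by
    intro z j
    conv_lhs => rw [pi_eq_sum_univ (X z), map_sum]
    simp [Finset.sum_apply]
  have hgd : Differentiable ℂ g := by
    have : g = fun z => ∑ j, (τ j : ℂ) *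
        (∑ i, X z i * F (fun j' => if i = j' then 1 else 0) j) * U z j := by
      funext z
      simp only [hg]
      exact Finset.sum_congr rfl fun j _ => by rw [hFX]
    rw [this]
    apply Differentiable.fun_sum
    intro j _
    exact (((differentiable_const _).mul
      (Differentiable.fun_sum fun i _ => (hXd i).mul (differentiable_const _))).mul (hUd j))
  -- first-step bound
  have hstep : ∀ z : ℂ, ‖g z‖
      ≤ ∑ j, τ j * (‖F (X z) j‖ * ‖U z j‖) := by
    intro z
    refine le_trans (norm_sum_le _ _) (Finset.sum_le_sum fun j _ => ?_)
    rw [norm_mul, norm_mul, Complex.norm_real, Real.norm_eq_abs, _root_.abs_of_nonneg (hτ j)]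
    exact le_of_eq (mul_assoc _ _ _)
  set Sx : ℝ := ∑ i, d i * ‖x i‖ ^ q with hSx
  set Su : ℝ := ∑ j, τ j * ‖u j‖ ^ q with hSu
  have hSxnn : 0 ≤ Sx := Finset.sum_nonneg fun i _ =>
    mul_nonneg (hd i) (Real.rpow_nonneg (norm_nonneg _) _)
  have hSunn : 0 ≤ Su := Finset.sum_nonneg fun j _ =>
    mul_nonneg (hτ j) (Real.rpow_nonneg (norm_nonneg _) _)
  -- bound on the whole strip
  have hXb : ∀ (v : ℂ) (z : ℂ), 0 ≤ z.re → z.re ≤ 1 →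
      ‖(‖v‖ : ℂ) ^ (e z) * v‖ ≤ (1 + ‖v‖) ^ q := by
    intro v z hz0 hz1
    rw [hmod v z hz1]
    have h1 : ‖v‖ ^ (q * (1 - z.re/2)) ≤ (1 + ‖v‖) ^ (q * (1 - z.re/2)) :=
      Real.rpow_le_rpow (norm_nonneg v) (by linarith) (by nlinarith)
    refine le_trans h1 (Real.rpow_le_rpow_of_exponent_le ?_ ?_)
    · have := norm_nonneg v; linarith
    · nlinarith
  have hB : BddAbove ((norm ∘ g) '' verticalClosedStrip 0 1) := by
    refine ⟨(∑ i, d i * (1 + ‖x i‖) ^ q) *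
      (∑ j, τ j * (1 + ‖u j‖) ^ q), ?_⟩
    rintro w ⟨z, hz, rfl⟩
    have hz0 : 0 ≤ z.re := hz.1
    have hz1 : z.re ≤ 1 := hz.2
    have hCx : ∀ j, ‖F (X z) j‖ ≤ ∑ i, d i * (1 + ‖x i‖) ^ q := by
      intro j
      refine le_trans (hF1 (X z) j) (Finset.sum_le_sum fun i _ => ?_)
      exact mul_le_mul_of_nonneg_left (hXb (x i) z hz0 hz1) (hd i)
    simp only [Function.comp_apply]
    refine le_trans (hstep z) ?_
    rw [Finset.mul_sum]
    refine Finset.sum_le_sum fun j _ => ?_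
    rw [show (∑ i, d i * (1 + ‖x i‖) ^ q) * (τ j * (1 + ‖u j‖) ^ q)
      = τ j * ((∑ i, d i * (1 + ‖x i‖) ^ q) * (1 + ‖u j‖) ^ q) by ring]
    refine mul_le_mul_of_nonneg_left ?_ (hτ j)
    refine mul_le_mul (hCx j) (hXb (u j) z hz0 hz1) (norm_nonneg _) ?_
    exact Finset.sum_nonneg fun i _ => mul_nonneg (hd i)
      (Real.rpow_nonneg (by have := norm_nonneg (x i); linarith) _)
  -- edge 0 bound
  have ha : ∀ z ∈ Complex.re ⁻¹' {0}, ‖g z‖ ≤ Sx * Su := by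
    intro z hz
    have hz0 : z.re = 0 := hz
    have hmu : ∀ j, ‖U z j‖ = ‖u j‖ ^ q := by
      intro j
      rw [show ‖U z j‖
        = ‖(‖u j‖ : ℂ) ^ (e z) * u j‖ from rfl,
        hmod (u j) z (by rw [hz0]; norm_num), hz0]
      norm_num
    have hFb : ∀ j, ‖F (X z) j‖ ≤ Sx := by
      intro j
      refine le_trans (hF1 (X z) j) (le_of_eq ?_)
      rw [hSx]
      refine Finset.sum_congr rfl fun i _ => ?_
      rw [show ‖X z i‖
        = ‖(‖x i‖ : ℂ) ^ (e z) * x i‖ from rfl,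
        hmod (x i) z (by rw [hz0]; norm_num), hz0]
      norm_num
    refine le_trans (hstep z) ?_
    calc ∑ j, τ j * (‖F (X z) j‖ * ‖U z j‖)
        ≤ ∑ j, τ j * (Sx * ‖u j‖ ^ q) := by
          refine Finset.sum_le_sum fun j _ => ?_
          refine mul_le_mul_of_nonneg_left ?_ (hτ j)
          rw [hmu j]
          exact mul_le_mul_of_nonneg_right (hFb j)
            (Real.rpow_nonneg (norm_nonneg _) _)
      _ = Sx * Su := by
          rw [hSu, Finset.mul_sum]
          exact Finset.sum_congr rfl fun j _ => by ring
  -- edge 1 bound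
  have hb : ∀ z ∈ Complex.re ⁻¹' {1}, ‖g z‖ ≤ Real.sqrt (k * Sx) * Real.sqrt Su := by
    intro z hz
    have hz1 : z.re = 1 := hz
    have hmx2 : ∀ i, ‖X z i‖ ^ 2 = ‖x i‖ ^ q := by
      intro i
      rw [show ‖X z i‖
        = ‖(‖x i‖ : ℂ) ^ (e z) * x i‖ from rfl,
        hmod (x i) z (le_of_eq hz1), hz1,
        show q * (1 - (1:ℝ)/2) = q/2 by ring,
        ← Real.rpow_natCast (‖x i‖ ^ (q/2)) 2,
        ← Real.rpow_mul (norm_nonneg _)]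
      norm_num
    have hmu2 : ∀ j, ‖U z j‖ ^ 2 = ‖u j‖ ^ q := by
      intro j
      rw [show ‖U z j‖
        = ‖(‖u j‖ : ℂ) ^ (e z) * u j‖ from rfl,
        hmod (u j) z (le_of_eq hz1), hz1,
        show q * (1 - (1:ℝ)/2) = q/2 by ring,
        ← Real.rpow_natCast (‖u j‖ ^ (q/2)) 2,
        ← Real.rpow_mul (norm_nonneg _)]
      norm_num
    have hFsq : ∑ j, τ j * ‖F (X z) j‖ ^ 2 = k * Sx := by
      rw [hF2 (X z), hSx]
      congr 1
      exact Finset.sum_congr rfl fun i _ => by rw [hmx2 i]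
    have hUsq : ∑ j, τ j * ‖U z j‖ ^ 2 = Su := by
      rw [hSu]
      exact Finset.sum_congr rfl fun j _ => by rw [hmu2 j]
    have hcs := Finset.sum_mul_sq_le_sq_mul_sq Finset.univ
      (fun j => Real.sqrt (τ j) * ‖F (X z) j‖)
      (fun j => Real.sqrt (τ j) * ‖U z j‖)
    have hsum1 : ∑ j, (Real.sqrt (τ j) * ‖F (X z) j‖)
        * (Real.sqrt (τ j) * ‖U z j‖)
        = ∑ j, τ j * (‖F (X z) j‖ * ‖U z j‖) := by
      refine Finset.sum_congr rfl fun j _ => ?_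
      rw [show (Real.sqrt (τ j) * ‖F (X z) j‖)
        * (Real.sqrt (τ j) * ‖U z j‖)
        = (Real.sqrt (τ j) * Real.sqrt (τ j))
          * (‖F (X z) j‖ * ‖U z j‖) by ring,
        Real.mul_self_sqrt (hτ j)]
    have hsum2 : ∑ j, (Real.sqrt (τ j) * ‖F (X z) j‖) ^ 2 = k * Sx := by
      rw [← hFsq]
      exact Finset.sum_congr rfl fun j _ => by rw [mul_pow, Real.sq_sqrt (hτ j)]
    have hsum3 : ∑ j, (Real.sqrt (τ j) * ‖U z j‖) ^ 2 = Su := by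
      rw [← hUsq]
      exact Finset.sum_congr rfl fun j _ => by rw [mul_pow, Real.sq_sqrt (hτ j)]
    rw [hsum1, hsum2, hsum3] at hcs
    refine le_trans (hstep z) ?_
    have hnn : 0 ≤ ∑ j, τ j * (‖F (X z) j‖ * ‖U z j‖) :=
      Finset.sum_nonneg fun j _ => mul_nonneg (hτ j)
        (mul_nonneg (norm_nonneg _) (norm_nonneg _))
    rw [← Real.sqrt_mul (mul_nonneg hk hSxnn)]
    exact (Real.le_sqrt hnn (mul_nonneg (mul_nonneg hk hSxnn) hSunn)).mpr hcs
  -- apply Hadamard three lines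
  set θ : ℝ := 2 - 2/q with hθ
  have hθ0 : 0 ≤ θ := by
    have h2q : 2/q ≤ 2 := by rw [div_le_iff₀ hq0]; nlinarith
    rw [hθ]; linarith
  have hθ1 : θ ≤ 1 := by
    have h2q : 1 ≤ 2/q := by rw [le_div_iff₀ hq0]; linarith
    rw [hθ]; linarith
  have hmem : (θ : ℂ) ∈ verticalClosedStrip 0 1 := by
    simp only [verticalClosedStrip, Set.mem_preimage, Complex.ofReal_re, Set.mem_Icc]
    exact ⟨hθ0, hθ1⟩
  have key := norm_le_interp_of_mem_verticalClosedStrip₀₁' g hmem hgd.diffContOnCl hB ha hb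
  -- identify g θ
  have heθ : e (θ : ℂ) = 0 := by
    have h1 : (q - 1) - (q/2) * θ = 0 := by rw [hθ]; field_simp; ring
    have : e (θ : ℂ) = ((q - 1) - (q/2) * θ : ℝ) := by
      simp only [he]
      push_cast
      ring
    rw [this, h1, Complex.ofReal_zero]
  have hXθ : X (θ : ℂ) = x := by
    funext i
    simp [hX, heθ]
  have hUθ : U (θ : ℂ) = u := by
    funext j
    simp [hU, heθ]
  have hgθ : g (θ : ℂ) = ∑ j, (τ j : ℂ) * F x j * u j := by
    simp only [hg, hXθ, hUθ]
  rw [hgθ, Complex.ofReal_re] at key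
  refine le_trans key (le_of_eq ?_)
  -- algebra on the right hand side
  have hq' : (0:ℝ) < 1/q := by positivity
  have hsq : Real.sqrt (k * Sx) * Real.sqrt Su = (k * (Sx * Su)) ^ ((1:ℝ)/2) := by
    rw [← Real.sqrt_mul (mul_nonneg hk hSxnn), Real.sqrt_eq_rpow, mul_assoc]
  rw [hsq, ← Real.rpow_mul (mul_nonneg hk (mul_nonneg hSxnn hSunn)),
    Real.mul_rpow hk (mul_nonneg hSxnn hSunn),
    show (1:ℝ)/2 * θ = 1 - 1/q by rw [hθ]; ring,
    show (Sx*Su) ^ (1-θ) * (k ^ ((1:ℝ) - 1/q) * (Sx*Su) ^ ((1:ℝ) - 1/q))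
      = k ^ ((1:ℝ) - 1/q) * ((Sx*Su) ^ (1-θ) * (Sx*Su) ^ ((1:ℝ) - 1/q)) by ring,
    ← Real.rpow_add' (mul_nonneg hSxnn hSunn) (by
      rw [hθ, show (1 - (2-2/q)) + (1-1/q) = 1/q by ring]
      positivity)]
  congr 1
  rw [hθ]; ring



/-- Quantum Hausdorff-Young inequality for k-transforms,
commutative finite-dimensional case. -/
theorem quantum_hausdorff_young {n m : ℕ} (hn : 0 < n) (hm : 0 < m)
    (d : Fin n → ℝ) (τ : Fin m → ℝ) (hd : ∀ i, 0 < d i) (hτ : ∀ j, 0 < τ j)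
    (k : ℝ) (hk : 0 < k)
    (F : (Fin n → ℂ) →ₗ[ℂ] (Fin m → ℂ)) (G : (Fin m → ℂ) →ₗ[ℂ] (Fin n → ℂ))
    (hadj : IsAdjointPair d τ F G)
    (hF1 : ∀ x, inorm (F x) ≤ wnorm d 1 x)
    (hFk : ∀ x, k * inorm x ≤ inorm (G (F x)))
    (hiso : ∀ y, G (F y) = (k : ℂ) • y)
    (p q : ℝ) (hp : 2 ≤ p) (hpq : 1 / p + 1 / q = 1)
    (x : Fin n → ℂ) :
    wnorm τ p (F x) ≤ k ^ (1 / p) * wnorm d q x := by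
  have hp0 : (0:ℝ) < p := by linarith
  have hp1 : (0:ℝ) < 1/p := by positivity
  have hp2 : 1/p ≤ 1/2 := by
    rw [div_le_div_iff₀ hp0 (by norm_num)]; linarith
  have hq1' : (1:ℝ)/2 ≤ 1/q := by linarith
  have hq0 : (0:ℝ) < q := by
    by_contra h
    push_neg at h
    have : 1/q ≤ 0 := one_div_nonpos.mpr h
    linarith
  have hq1 : 1 ≤ q := by
    have : 1/q ≤ 1 := by linarith
    rw [div_le_one hq0] at this; linarith
  have hq2 : q ≤ 2 := by
    rw [div_le_div_iff₀ (by norm_num) hq0] at hq1'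
    linarith
  have hpq2 : (p - 1) * q = p := by
    have h1 : q + p = p * q := by
      field_simp at hpq
      linarith
    nlinarith
  -- pointwise L1 → Linfty bound
  have hF1' : ∀ (y : Fin n → ℂ) (j : Fin m),
      ‖F y j‖ ≤ ∑ i, d i * ‖y i‖ := by
    intro y j
    have h1 : ‖F y j‖ ≤ inorm (F y) := by
      rw [inorm]
      exact le_ciSup (f := fun j' => ‖F y j'‖) (Set.Finite.bddAbove (Set.finite_range _)) j
    have h2 := hF1 y
    rw [wnorm] at h2
    simp only [Real.rpow_one, one_div_one] at h2
    exact le_trans h1 (le_trans h2 (le_of_eq rfl))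
  -- Plancherel
  have hF2' : ∀ y : Fin n → ℂ,
      ∑ j, τ j * ‖F y j‖ ^ 2 = k * ∑ i, d i * ‖y i‖ ^ 2 := by
    intro y
    have h := hadj y (F y)
    rw [hiso y] at h
    have hL : ∑ j, (τ j : ℂ) * (starRingEnd ℂ) (F y j) * F y j
        = ((∑ j, τ j * ‖F y j‖ ^ 2 : ℝ) : ℂ) := by
      push_cast
      refine Finset.sum_congr rfl fun j _ => ?_
      rw [mul_assoc, mul_comm ((starRingEnd ℂ) (F y j)), Complex.mul_conj,
        Complex.normSq_eq_norm_sq]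
      push_cast
      ring
    have hR : ∑ i, (d i : ℂ) * (starRingEnd ℂ) (y i) * ((k:ℂ) • y) i
        = ((k * ∑ i, d i * ‖y i‖ ^ 2 : ℝ) : ℂ) := by
      push_cast
      rw [Finset.mul_sum]
      refine Finset.sum_congr rfl fun i _ => ?_
      simp only [Pi.smul_apply, smul_eq_mul]
      rw [show (d i : ℂ) * (starRingEnd ℂ) (y i) * ((k:ℂ) * y i)
        = (k:ℂ) * ((d i:ℂ) * (y i * (starRingEnd ℂ) (y i))) by ring, Complex.mul_conj,
        Complex.normSq_eq_norm_sq]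
      push_cast
      ring
    rw [hL, hR] at h
    exact_mod_cast h
  -- dual element
  set u : Fin m → ℂ := fun j =>
    (starRingEnd ℂ) (F x j) * ((‖F x j‖ ^ (p - 2) : ℝ) : ℂ) with hu
  set Sp : ℝ := ∑ j, τ j * ‖F x j‖ ^ p with hSp
  set Sx : ℝ := ∑ i, d i * ‖x i‖ ^ q with hSx
  have hSpnn : 0 ≤ Sp := Finset.sum_nonneg fun j _ =>
    mul_nonneg (hτ j).le (Real.rpow_nonneg (norm_nonneg _) _)
  have hSxnn : 0 ≤ Sx := Finset.sum_nonneg fun i _ =>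
    mul_nonneg (hd i).le (Real.rpow_nonneg (norm_nonneg _) _)
  -- pairing identity
  have hpair : ∑ j, (τ j : ℂ) * F x j * u j = (Sp : ℂ) := by
    rw [hSp]
    push_cast
    refine Finset.sum_congr rfl fun j _ => ?_
    rw [hu]
    set r : ℝ := ‖F x j‖ with hr
    rw [show (τ j : ℂ) * F x j * ((starRingEnd ℂ) (F x j) * ((r ^ (p-2) : ℝ) : ℂ))
      = (τ j : ℂ) * ((F x j * (starRingEnd ℂ) (F x j)) * ((r ^ (p-2) : ℝ) : ℂ)) by ring,
      Complex.mul_conj, Complex.normSq_eq_norm_sq, ← hr]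
    by_cases hz : r = 0
    · rw [hz]
      simp [Real.zero_rpow (show p ≠ 0 by positivity)]
    · have hrpos : 0 < r := lt_of_le_of_ne (norm_nonneg _) (Ne.symm hz)
      have : (r : ℝ) ^ (2:ℕ) * r ^ (p - 2) = r ^ p := by
        rw [← Real.rpow_natCast r 2, ← Real.rpow_add hrpos]
        norm_num
      push_cast [← this]
      ring
  -- norm of u
  have hunorm : ∑ j, τ j * ‖u j‖ ^ q = Sp := by
    rw [hSp]
    refine Finset.sum_congr rfl fun j _ => ?_
    congr 1
    rw [hu]
    set r : ℝ := ‖F x j‖ with hr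
    rw [norm_mul, Complex.norm_conj, Complex.norm_real, Real.norm_eq_abs, ← hr,
      _root_.abs_of_nonneg (Real.rpow_nonneg (norm_nonneg _) _), ← hr]
    by_cases hz : r = 0
    · rw [hz, Real.zero_rpow (by positivity : p ≠ 0), zero_mul,
        Real.zero_rpow (by positivity : q ≠ 0)]
    · have hrpos : 0 < r := lt_of_le_of_ne (norm_nonneg _) (Ne.symm hz)
      rw [show r * r ^ (p-2) = r ^ (p-1) by
          nth_rw 1 [← Real.rpow_one r]
          rw [← Real.rpow_add hrpos]
          congr 1
          ring,
        ← Real.rpow_mul hrpos.le, hpq2]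
  -- apply the core bound
  have key := core_bound d τ (fun i => (hd i).le) (fun j => (hτ j).le) k hk.le F hF1' hF2'
    q hq1 hq2 x u
  rw [hpair, hunorm, Complex.norm_real, Real.norm_eq_abs, _root_.abs_of_nonneg hSpnn,
    show 1 - 1/q = 1/p by linarith] at key
  -- conclude
  have hwp : wnorm τ p (F x) = Sp ^ (1/p) := by rw [wnorm, hSp]
  have hwq : wnorm d q x = Sx ^ (1/q) := by rw [wnorm, hSx]
  rw [hwp, hwq]
  by_cases hz : Sp = 0
  · rw [hz, Real.zero_rpow (by positivity : 1/p ≠ 0)]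
    positivity
  · have hSppos : 0 < Sp := lt_of_le_of_ne hSpnn (Ne.symm hz)
    have hkey2 : Sp ^ (1/p) * Sp ^ (1/q) ≤ (k ^ (1/p) * Sx ^ (1/q)) * Sp ^ (1/q) := by
      rw [← Real.rpow_add hSppos, hpq, Real.rpow_one]
      calc Sp ≤ k ^ (1/p) * (Sx * Sp) ^ (1/q) := key
        _ = (k ^ (1/p) * Sx ^ (1/q)) * Sp ^ (1/q) := by
            rw [Real.mul_rpow hSxnn hSpnn]; ring
    have := le_of_mul_le_mul_right hkey2 (Real.rpow_pos_of_pos hSppos (1/q))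
    linarith
end

section
/- Quantum Wigderson-Wigderson uncertainty principle for general conjugate exponents, commutative finite-dimensional case: if k > 0, F is a k-transform, and F* ∘ F = k • id, then for all reals p, q with 2 ≤ p < ∞ and 1/p + 1/q = 1, and any x : Fin n → ℂ, one has ‖x‖_{q,d} * ‖F x‖_{q,τ} ≥ k^(1 − 2/p) * ‖x‖_{p,d} * ‖F x‖_{p,τ}. -/
open Finset

namespace QWW

lemma sum_nn {n : ℕ} (d : Fin n → ℝ) (hd : ∀ i, 0 ≤ d i) (p : ℝ) (x : Fin n → ℂ) :
    0 ≤ ∑ i, d i * ‖x i‖ ^ p :=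
  Finset.sum_nonneg fun i _ => mul_nonneg (hd i) (Real.rpow_nonneg (norm_nonneg _) _)

lemma wnorm_nonneg {n : ℕ} (d : Fin n → ℝ) (hd : ∀ i, 0 ≤ d i) (p : ℝ) (x : Fin n → ℂ) :
    0 ≤ wnorm d p x :=
  Real.rpow_nonneg (sum_nn d hd p x) _

lemma wnorm_pow {n : ℕ} (d : Fin n → ℝ) (hd : ∀ i, 0 ≤ d i) {p : ℝ} (hp : 0 < p)
    (x : Fin n → ℂ) : wnorm d p x ^ p = ∑ i, d i * ‖x i‖ ^ p := by
  rw [wnorm, ← Real.rpow_mul (sum_nn d hd p x), one_div_mul_cancel hp.ne', Real.rpow_one]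

lemma wnorm_one {n : ℕ} (d : Fin n → ℝ) (x : Fin n → ℂ) :
    wnorm d 1 x = ∑ i, d i * ‖x i‖ := by
  simp [wnorm, Real.rpow_one]

/-- weighted Cauchy-Schwarz -/
lemma wCS {m : ℕ} (w a b : Fin m → ℝ) (hw : ∀ j, 0 ≤ w j) :
    ∑ j, w j * (a j * b j) ≤
      Real.sqrt (∑ j, w j * a j ^ (2:ℝ)) * Real.sqrt (∑ j, w j * b j ^ (2:ℝ)) := by
  have h := Real.sum_mul_le_sqrt_mul_sqrt Finset.univ
      (fun j => Real.sqrt (w j) * a j) (fun j => Real.sqrt (w j) * b j)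
  calc ∑ j, w j * (a j * b j) = ∑ j, (Real.sqrt (w j) * a j) * (Real.sqrt (w j) * b j) := by
        refine Finset.sum_congr rfl fun j _ => ?_
        rw [mul_mul_mul_comm, Real.mul_self_sqrt (hw j)]
    _ ≤ _ := by
        refine h.trans (le_of_eq ?_)
        have e : ∀ c : Fin m → ℝ, ∑ j, (Real.sqrt (w j) * c j) ^ 2 = ∑ j, w j * c j ^ (2:ℝ) := by
          intro c
          refine Finset.sum_congr rfl fun j _ => ?_
          rw [mul_pow, Real.sq_sqrt (hw j), Real.rpow_two]
        rw [e a, e b]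

/-- if the weighted q-sum is zero (positive weights, positive exponent), the vector is 0. -/
lemma eq_zero_of_sum_eq_zero {n : ℕ} (d : Fin n → ℝ) (hd : ∀ i, 0 < d i) {q : ℝ} (hq : 0 < q)
    (x : Fin n → ℂ) (h : ∑ i, d i * ‖x i‖ ^ q = 0) : x = 0 := by
  have h' := (Finset.sum_eq_zero_iff_of_nonneg (fun i _ =>
    mul_nonneg (hd i).le (Real.rpow_nonneg (norm_nonneg _) _))).mp h
  funext i
  have := h' i (Finset.mem_univ i)
  have h2 : ‖x i‖ ^ q = 0 := by
    rcases mul_eq_zero.mp this with h3 | h3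
    · exact absurd h3 (hd i).ne'
    · exact h3
  have h3 : ‖x i‖ = 0 := by
    by_contra hc
    exact hc (by
      have := Real.rpow_eq_zero_iff_of_nonneg (norm_nonneg (x i)) |>.mp h2
      exact this.1)
  simpa using (norm_eq_zero.mp h3)


section adjoint
variable {n m : ℕ} (d : Fin n → ℝ) (τ : Fin m → ℝ)
  (F : (Fin n → ℂ) →ₗ[ℂ] (Fin m → ℂ)) (G : (Fin m → ℂ) →ₗ[ℂ] (Fin n → ℂ))

lemma term_eq (w : ℝ) (z : ℂ) :
    (w : ℂ) * (starRingEnd ℂ) z * z = ((w * ‖z‖ ^ (2:ℝ) : ℝ) : ℂ) := by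
  rw [Real.rpow_two, Complex.sq_norm, Complex.ofReal_mul, ← Complex.mul_conj]
  ring

lemma parseval (hadj : IsAdjointPair d τ F G) (k : ℝ)
    (hiso : ∀ y, G (F y) = (k : ℂ) • y) (x : Fin n → ℂ) :
    ∑ j, τ j * ‖F x j‖ ^ (2:ℝ) = k * ∑ i, d i * ‖x i‖ ^ (2:ℝ) := by
  have h := hadj x (F x)
  rw [hiso x] at h
  have hL : ∑ j, (τ j : ℂ) * (starRingEnd ℂ) (F x j) * F x j
      = ((∑ j, τ j * ‖F x j‖ ^ (2:ℝ) : ℝ) : ℂ) := by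
    rw [Complex.ofReal_sum]
    exact Finset.sum_congr rfl fun j _ => term_eq _ _
  have hR : ∑ i, (d i : ℂ) * (starRingEnd ℂ) (x i) * ((k : ℂ) • x) i
      = ((k * ∑ i, d i * ‖x i‖ ^ (2:ℝ) : ℝ) : ℂ) := by
    rw [Complex.ofReal_mul, Complex.ofReal_sum, Finset.mul_sum]
    refine Finset.sum_congr rfl fun i _ => ?_
    rw [← term_eq (d i) (x i)]
    simp only [Pi.smul_apply, smul_eq_mul]
    ring
  rw [hL, hR] at h
  exact_mod_cast h

/-- pointwise bound for the adjoint: |G u i| ≤ ∑ τ |u|. -/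
lemma adj_pointwise (hadj : IsAdjointPair d τ F G) (hd : ∀ i, 0 < d i) (hτ : ∀ j, 0 ≤ τ j)
    (hF1 : ∀ x j, ‖F x j‖ ≤ ∑ i, d i * ‖x i‖)
    (u : Fin m → ℂ) (i : Fin n) :
    ‖G u i‖ ≤ ∑ j, τ j * ‖u j‖ := by
  classical
  set x : Fin n → ℂ := fun i' => if i' = i then (((d i)⁻¹ : ℝ) : ℂ) else 0 with hx
  have habs : ∀ i', ‖x i'‖ = if i' = i then (d i)⁻¹ else 0 := by
    intro i'
    rcases eq_or_ne i' i with h | h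
    · subst h
      have hxi : x i' = (((d i')⁻¹ : ℝ) : ℂ) := by rw [hx]; simp
      rw [hxi, if_pos rfl, Complex.norm_real, Real.norm_eq_abs, abs_of_nonneg (inv_nonneg.mpr (hd i').le)]
    · rw [hx]; simp [h]
  have hsum1 : ∑ i', d i' * ‖x i'‖ = 1 := by
    rw [Finset.sum_eq_single i]
    · rw [habs, if_pos rfl, mul_inv_cancel₀ (hd i).ne']
    · intro b _ hb; rw [habs, if_neg hb, mul_zero]
    · intro hi; exact absurd (Finset.mem_univ i) hi
  have h := hadj x u
  have hR : ∑ i', (d i' : ℂ) * (starRingEnd ℂ) (x i') * G u i' = G u i := by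
    rw [Finset.sum_eq_single i]
    · simp only [hx, if_pos rfl]
      rw [show (starRingEnd ℂ) (((d i)⁻¹ : ℝ) : ℂ) = (((d i)⁻¹ : ℝ) : ℂ) from
        Complex.conj_ofReal _]
      rw [show ((d i : ℂ)) * (((d i)⁻¹ : ℝ) : ℂ) = 1 by
        push_cast; exact mul_inv_cancel₀ (by exact_mod_cast (hd i).ne')]
      rw [one_mul]
    · intro b _ hb; simp [hx, if_neg hb]
    · intro hi; exact absurd (Finset.mem_univ i) hi
  rw [hR] at h
  rw [← h]
  calc ‖∑ j, (τ j : ℂ) * (starRingEnd ℂ) (F x j) * u j‖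
      ≤ ∑ j, ‖(τ j : ℂ) * (starRingEnd ℂ) (F x j) * u j‖ :=
        norm_sum_le _ _
    _ ≤ ∑ j, τ j * ‖u j‖ := by
        refine Finset.sum_le_sum fun j _ => ?_
        rw [norm_mul, norm_mul, Complex.norm_real, Real.norm_eq_abs, abs_of_nonneg (hτ j), Complex.norm_conj]
        have h1 : ‖F x j‖ ≤ 1 := hsum1 ▸ hF1 x j
        calc τ j * ‖F x j‖ * ‖u j‖
            ≤ τ j * 1 * ‖u j‖ :=
              mul_le_mul_of_nonneg_right (mul_le_mul_of_nonneg_left h1 (hτ j))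
                (norm_nonneg _)
          _ = τ j * ‖u j‖ := by ring

/-- L² bound for the adjoint. -/
lemma adj_l2 (hadj : IsAdjointPair d τ F G) (hd : ∀ i, 0 ≤ d i) (hτ : ∀ j, 0 ≤ τ j)
    (k : ℝ) (hk : 0 < k)
    (h2 : ∀ y, ∑ j, τ j * ‖F y j‖ ^ (2:ℝ) ≤ k * ∑ i, d i * ‖y i‖ ^ (2:ℝ))
    (u : Fin m → ℂ) :
    ∑ i, d i * ‖G u i‖ ^ (2:ℝ) ≤ k * ∑ j, τ j * ‖u j‖ ^ (2:ℝ) := by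
  set S := ∑ i, d i * ‖G u i‖ ^ (2:ℝ) with hS
  set T := ∑ j, τ j * ‖u j‖ ^ (2:ℝ) with hT
  have hS0 : 0 ≤ S := sum_nn d hd _ _
  have hT0 : 0 ≤ T := sum_nn τ hτ _ _
  have h := hadj (G u) u
  have hR : ∑ i, (d i : ℂ) * (starRingEnd ℂ) (G u i) * G u i = ((S : ℝ) : ℂ) := by
    rw [hS, Complex.ofReal_sum]
    exact Finset.sum_congr rfl fun i _ => term_eq _ _
  rw [hR] at h
  have hSle : S ≤ Real.sqrt (k * S) * Real.sqrt T := by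
    have h0 : ‖∑ j, (τ j : ℂ) * (starRingEnd ℂ) (F (G u) j) * u j‖ = S := by
      rw [h, Complex.norm_real, Real.norm_eq_abs, abs_of_nonneg hS0]
    calc S = ‖∑ j, (τ j : ℂ) * (starRingEnd ℂ) (F (G u) j) * u j‖ := h0.symm
      _
        ≤ ∑ j, τ j * (‖F (G u) j‖ * ‖u j‖) := by
          refine (norm_sum_le _ _).trans (le_of_eq ?_)
          refine Finset.sum_congr rfl fun j _ => ?_
          rw [norm_mul, norm_mul, Complex.norm_real, Real.norm_eq_abs, abs_of_nonneg (hτ j), Complex.norm_conj,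
            mul_assoc]
      _ ≤ Real.sqrt (∑ j, τ j * ‖F (G u) j‖ ^ (2:ℝ)) *
            Real.sqrt (∑ j, τ j * ‖u j‖ ^ (2:ℝ)) := wCS τ _ _ hτ
      _ ≤ Real.sqrt (k * S) * Real.sqrt T := by
          refine mul_le_mul_of_nonneg_right ?_ (Real.sqrt_nonneg _)
          exact Real.sqrt_le_sqrt ((h2 (G u)).trans (le_of_eq rfl))
  rcases eq_or_lt_of_le hS0 with h0 | hpos
  · rw [← h0]; positivity
  · have hsq : Real.sqrt (k * S) * Real.sqrt T = Real.sqrt (k * S * T) := by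
      rw [← Real.sqrt_mul (by positivity)]
    rw [hsq] at hSle
    have h2' : S ^ 2 ≤ k * S * T := by
      have := Real.sq_sqrt (show (0:ℝ) ≤ k * S * T by positivity)
      nlinarith [Real.sqrt_nonneg (k * S * T)]
    nlinarith

end adjoint


lemma conj_identity : True := trivial

lemma dual_bound {m : ℕ} (τ : Fin m → ℝ) (hτ : ∀ j, 0 < τ j) (p q : ℝ)
    (hp1 : 1 < p) (hq0 : 0 < q) (hpq : 1/p + 1/q = 1)
    (v : Fin m → ℂ) (C : ℝ) (hC : 0 ≤ C)
    (h : ∀ u : Fin m → ℂ, ‖∑ j, (τ j : ℂ) * v j * u j‖ ≤ C * wnorm τ q u) :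
    wnorm τ p v ≤ C := by
  have hp0 : 0 < p := lt_trans one_pos hp1
  have hpq' : (p - 1) * q = p := by
    have h1 : 1/p + 1/q = 1 := hpq
    field_simp at h1
    nlinarith [h1]
  set S := ∑ j, τ j * ‖v j‖ ^ p with hSdef
  have hS0 : 0 ≤ S := sum_nn τ (fun j => (hτ j).le) _ _
  set u : Fin m → ℂ :=
    fun j => (starRingEnd ℂ) (v j) * ((‖v j‖ ^ (p - 2 : ℝ) : ℝ) : ℂ) with hu
  have habs_u : ∀ j, ‖u j‖ = ‖v j‖ ^ (p - 1 : ℝ) := by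
    intro j
    rcases eq_or_ne (v j) 0 with h0 | h0
    · rw [hu]; simp only [h0, map_zero, norm_zero]
      rw [Real.zero_rpow (by linarith : p - 1 ≠ 0)]
      simp
    · have hpos : 0 < ‖v j‖ := norm_pos_iff.mpr h0
      rw [hu]
      simp only []
      rw [norm_mul, Complex.norm_conj, Complex.norm_real, Real.norm_eq_abs,
        abs_of_nonneg (Real.rpow_nonneg (norm_nonneg _) _),
        show (p - 1 : ℝ) = 1 + (p - 2) by ring, Real.rpow_add hpos, Real.rpow_one]
  have hterm : ∀ j, (τ j : ℂ) * v j * u j = ((τ j * ‖v j‖ ^ p : ℝ) : ℂ) := by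
    intro j
    rcases eq_or_ne (v j) 0 with h0 | h0
    · rw [hu]; simp only [h0, map_zero, zero_mul, mul_zero, map_zero, norm_zero]
      rw [Real.zero_rpow hp0.ne', mul_zero, Complex.ofReal_zero]
    · have hpos : 0 < ‖v j‖ := norm_pos_iff.mpr h0
      rw [hu]
      simp only []
      have : v j * ((starRingEnd ℂ) (v j) * ((‖v j‖ ^ (p - 2 : ℝ) : ℝ) : ℂ))
          = ((‖v j‖ ^ p : ℝ) : ℂ) := by
        rw [← mul_assoc, Complex.mul_conj, ← Complex.sq_norm, ← Complex.ofReal_mul,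
          ← Real.rpow_two, ← Real.rpow_add hpos, show (2 : ℝ) + (p - 2) = p by ring]
      calc (τ j : ℂ) * v j * u j = (τ j : ℂ) *
            (v j * ((starRingEnd ℂ) (v j) * ((‖v j‖ ^ (p - 2 : ℝ) : ℝ) : ℂ))) := by
              rw [hu]; ring
        _ = ((τ j * ‖v j‖ ^ p : ℝ) : ℂ) := by rw [this, Complex.ofReal_mul]
  have hsum : ∑ j, (τ j : ℂ) * v j * u j = ((S : ℝ) : ℂ) := by
    rw [hSdef, Complex.ofReal_sum]
    exact Finset.sum_congr rfl fun j _ => hterm j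
  have hwu : wnorm τ q u = S ^ (1/q) := by
    rw [wnorm, hSdef]
    congr 1
    refine Finset.sum_congr rfl fun j _ => ?_
    rw [habs_u j, ← Real.rpow_mul (norm_nonneg _)]
    rw [hpq']
  have hmain := h u
  rw [hsum, Complex.norm_real, Real.norm_eq_abs, abs_of_nonneg hS0, hwu] at hmain
  have hwv : wnorm τ p v = S ^ (1/p) := by rw [wnorm, hSdef]
  rw [hwv]
  rcases eq_or_lt_of_le hS0 with h0 | hpos
  · rw [← h0, Real.zero_rpow (by positivity : (1:ℝ)/p ≠ 0)]
    exact hC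
  · have hq' : 0 < S ^ (1/q) := Real.rpow_pos_of_pos hpos _
    have : S ^ (1/p) * S ^ (1/q) ≤ C * S ^ (1/q) := by
      rw [← Real.rpow_add hpos, hpq, Real.rpow_one]
      exact hmain
    exact le_of_mul_le_mul_right this hq'


section key

lemma key_normalized {n m : ℕ} (d : Fin n → ℝ) (τ : Fin m → ℝ)
    (hd : ∀ i, 0 < d i) (hτ : ∀ j, 0 < τ j) (k : ℝ) (hk : 0 < k)
    (F : (Fin n → ℂ) →ₗ[ℂ] (Fin m → ℂ))
    (h1 : ∀ y j, ‖F y j‖ ≤ ∑ i, d i * ‖y i‖)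
    (h2 : ∀ y, ∑ j, τ j * ‖F y j‖ ^ (2:ℝ)
            ≤ k * ∑ i, d i * ‖y i‖ ^ (2:ℝ))
    (p q : ℝ) (hp : 2 ≤ p) (hpq : 1/p + 1/q = 1)
    (x : Fin n → ℂ) (u : Fin m → ℂ)
    (hx1 : ∑ i, d i * ‖x i‖ ^ q = 1)
    (hu1 : ∑ j, τ j * ‖u j‖ ^ q = 1) :
    ‖∑ j, (τ j : ℂ) * F x j * u j‖ ≤ k ^ ((1:ℝ)/p) := by
  classical
  have hp0 : (0:ℝ) < p := by linarith
  have h1p : 1/p ≤ 1/2 := by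
    rw [div_le_div_iff₀ hp0 (by norm_num)]; linarith
  have h1p0 : 0 < 1/p := by positivity
  have h1q : 1/q = 1 - 1/p := by linarith
  have hq0 : (0:ℝ) < q := by
    have : 0 < 1/q := by rw [h1q]; linarith
    exact one_div_pos.mp this
  have hqt2 : q * (2 - 2/p) = 2 := by
    calc q * (2 - 2/p) = 2*(q*(1 - 1/p)) := by ring
      _ = 2*(q*(1/q)) := by rw [← h1q]
      _ = 2 := by rw [one_div, mul_inv_cancel₀ hq0.ne', mul_one]
  set t : ℝ := 1 - 2/p with ht
  have ht0 : 0 ≤ t := by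
    have : 2/p ≤ 1 := by rw [div_le_one hp0]; linarith
    simpa [ht] using by linarith
  have ht1 : t ≤ 1 := by
    have : 0 ≤ 2/p := by positivity
    simp only [ht]; linarith
  -- the analytic families
  set X : ℂ → Fin n → ℂ := fun z i =>
    Complex.exp (((q * Real.log (‖x i‖) / 2 : ℝ) : ℂ) * (1 + z)) *
      (x i / (‖x i‖ : ℂ)) with hX
  set U : ℂ → Fin m → ℂ := fun z j =>
    Complex.exp (((q * Real.log (‖u j‖) / 2 : ℝ) : ℂ) * (1 + z)) *
      (u j / (‖u j‖ : ℂ)) with hU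
  -- modulus formula
  have habsX : ∀ z : ℂ, 0 ≤ z.re → ∀ i,
      ‖X z i‖ = ‖x i‖ ^ (q * (1 + z.re) / 2) := by
    intro z hz i
    rcases eq_or_ne (x i) 0 with h0 | h0
    · rw [hX]; simp only [h0, map_zero, Complex.ofReal_zero, zero_div, mul_zero, zero_mul, norm_zero]
      rw [Real.zero_rpow (by nlinarith [mul_nonneg hq0.le hz] : q * (1 + z.re) / 2 ≠ 0)]
    · have hpos : 0 < ‖x i‖ := norm_pos_iff.mpr h0
      rw [hX]
      simp only []
      rw [norm_mul, Complex.norm_exp, norm_div, Complex.norm_real, Real.norm_eq_abs,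
        abs_of_nonneg hpos.le, div_self hpos.ne', mul_one]
      rw [Complex.re_ofReal_mul, Real.rpow_def_of_pos hpos]
      congr 1
      simp only [Complex.re_ofReal_mul, Complex.add_re, Complex.one_re]
      ring
  have habsU : ∀ z : ℂ, 0 ≤ z.re → ∀ j,
      ‖U z j‖ = ‖u j‖ ^ (q * (1 + z.re) / 2) := by
    intro z hz j
    rcases eq_or_ne (u j) 0 with h0 | h0
    · rw [hU]; simp only [h0, map_zero, Complex.ofReal_zero, zero_div, mul_zero, zero_mul, norm_zero]
      rw [Real.zero_rpow (by nlinarith [mul_nonneg hq0.le hz] : q * (1 + z.re) / 2 ≠ 0)]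
    · have hpos : 0 < ‖u j‖ := norm_pos_iff.mpr h0
      rw [hU]
      simp only []
      rw [norm_mul, Complex.norm_exp, norm_div, Complex.norm_real, Real.norm_eq_abs,
        abs_of_nonneg hpos.le, div_self hpos.ne', mul_one]
      rw [Complex.re_ofReal_mul, Real.rpow_def_of_pos hpos]
      congr 1
      simp only [Complex.re_ofReal_mul, Complex.add_re, Complex.one_re]
      ring
  -- value at t
  have hq1t : q * (1 + t) = 2 := by rw [ht]; linarith [hqt2]
  have hscal : ∀ L : ℝ, (((q * L / 2 : ℝ) : ℂ) * (1 + ((t:ℝ):ℂ))) = ((L : ℝ) : ℂ) := by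
    intro L
    have hreal : (q * L / 2) * (1 + t) = L := by
      calc (q * L / 2) * (1 + t) = (q * (1 + t)) * L / 2 := by ring
        _ = 2 * L / 2 := by rw [hq1t]
        _ = L := by ring
    calc (((q * L / 2 : ℝ) : ℂ) * (1 + ((t:ℝ):ℂ)))
        = (((q * L / 2) * (1 + t) : ℝ) : ℂ) := by push_cast; ring
      _ = ((L : ℝ) : ℂ) := by rw [hreal]
  have hXt : X ((t:ℝ) : ℂ) = x := by
    funext i
    rcases eq_or_ne (x i) 0 with h0 | h0
    · rw [hX]; simp [h0]
    · have hpos : 0 < ‖x i‖ := norm_pos_iff.mpr h0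
      rw [hX]
      simp only []
      rw [hscal, ← Complex.ofReal_exp, Real.exp_log hpos, mul_comm,
        div_mul_cancel₀ _ (Complex.ofReal_ne_zero.mpr hpos.ne')]
  have hUt : U ((t:ℝ) : ℂ) = u := by
    funext j
    rcases eq_or_ne (u j) 0 with h0 | h0
    · rw [hU]; simp [h0]
    · have hpos : 0 < ‖u j‖ := norm_pos_iff.mpr h0
      rw [hU]
      simp only []
      rw [hscal, ← Complex.ofReal_exp, Real.exp_log hpos, mul_comm,
        div_mul_cancel₀ _ (Complex.ofReal_ne_zero.mpr hpos.ne')]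
  -- the function for Hadamard
  set f : ℂ → ℂ := fun z => ∑ j, (τ j : ℂ) * F (X z) j * U z j with hf
  -- decomposition of F
  have hFX : ∀ (y : Fin n → ℂ) (j : Fin m),
      F y j = ∑ i, y i * F (fun j' => if i = j' then (1:ℂ) else 0) j := by
    intro y j
    conv_lhs => rw [pi_eq_sum_univ y, map_sum]
    simp [Finset.sum_apply]
  -- differentiability
  have hdiffX : ∀ i, Differentiable ℂ (fun z => X z i) := by
    intro i
    rw [hX]
    exact (((differentiable_const _).mul
      ((differentiable_const _).add differentiable_id)).cexp).mul (differentiable_const _)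
  have hdiffU : ∀ j, Differentiable ℂ (fun z => U z j) := by
    intro j
    rw [hU]
    exact (((differentiable_const _).mul
      ((differentiable_const _).add differentiable_id)).cexp).mul (differentiable_const _)
  have hf_diff : Differentiable ℂ f := by
    have hf_eq : f = fun z => ∑ j, (τ j : ℂ) *
        (∑ i, X z i * F (fun j' => if i = j' then (1:ℂ) else 0) j) * U z j := by
      funext z
      exact Finset.sum_congr rfl fun j _ => by rw [← hFX (X z) j]
    rw [hf_eq]
    refine Differentiable.fun_sum fun j _ => ?_
    exact ((differentiable_const _).mul
      (Differentiable.fun_sum fun i _ => (hdiffX i).mul_const _)).mul (hdiffU j)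
  -- boundedness on the strip
  set C : Fin n → ℝ := fun i =>
    max (‖x i‖ ^ (q/2)) (‖x i‖ ^ q) with hC
  set C' : Fin m → ℝ := fun j =>
    max (‖u j‖ ^ (q/2)) (‖u j‖ ^ q) with hC'
  have hC0 : ∀ i, 0 ≤ C i := fun i =>
    le_max_of_le_left (Real.rpow_nonneg (norm_nonneg _) _)
  have hC'0 : ∀ j, 0 ≤ C' j := fun j =>
    le_max_of_le_left (Real.rpow_nonneg (norm_nonneg _) _)
  have hXle : ∀ z : ℂ, z.re ∈ Set.Icc (0:ℝ) 1 → ∀ i, ‖X z i‖ ≤ C i := by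
    intro z hz i
    rw [habsX z hz.1 i]
    rcases eq_or_lt_of_le (norm_nonneg (x i)) with h0 | hpos
    · rw [← h0, Real.zero_rpow
        (by nlinarith [mul_nonneg hq0.le hz.1] : q * (1 + z.re) / 2 ≠ 0)]
      exact hC0 i
    · rcases le_total (‖x i‖) 1 with hle | hge
      · refine le_max_of_le_left ?_
        exact Real.rpow_le_rpow_of_exponent_ge hpos hle (by nlinarith [hz.1])
      · refine le_max_of_le_right ?_
        exact Real.rpow_le_rpow_of_exponent_le hge (by nlinarith [hz.2])
  have hUle : ∀ z : ℂ, z.re ∈ Set.Icc (0:ℝ) 1 → ∀ j, ‖U z j‖ ≤ C' j := by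
    intro z hz j
    rw [habsU z hz.1 j]
    rcases eq_or_lt_of_le (norm_nonneg (u j)) with h0 | hpos
    · rw [← h0, Real.zero_rpow
        (by nlinarith [mul_nonneg hq0.le hz.1] : q * (1 + z.re) / 2 ≠ 0)]
      exact hC'0 j
    · rcases le_total (‖u j‖) 1 with hle | hge
      · refine le_max_of_le_left ?_
        exact Real.rpow_le_rpow_of_exponent_ge hpos hle (by nlinarith [hz.1])
      · refine le_max_of_le_right ?_
        exact Real.rpow_le_rpow_of_exponent_le hge (by nlinarith [hz.2])
  -- generic bound for |f z| in terms of bounds on |X z| and |U z|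
  have hfbound : ∀ (z : ℂ) (a : Fin n → ℝ) (b : Fin m → ℝ),
      (∀ i, ‖X z i‖ ≤ a i) → (∀ j, ‖U z j‖ ≤ b j) →
      ‖f z‖ ≤ ∑ j, τ j *
        ((∑ i, a i * ‖F (fun j' => if i = j' then (1:ℂ) else 0) j‖) * b j) := by
    intro z a b haX hbU
    have hb0 : ∀ j, 0 ≤ b j := fun j => le_trans (norm_nonneg _) (hbU j)
    calc ‖f z‖ ≤ ∑ j, ‖(τ j : ℂ) * F (X z) j * U z j‖ :=
          norm_sum_le _ _
      _ ≤ _ := by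
          refine Finset.sum_le_sum fun j _ => ?_
          rw [norm_mul, norm_mul, Complex.norm_real, Real.norm_eq_abs, abs_of_nonneg (hτ j).le, mul_assoc]
          refine mul_le_mul_of_nonneg_left ?_ (hτ j).le
          refine mul_le_mul ?_ (hbU j) (norm_nonneg _) ?_
          · rw [hFX (X z) j]
            refine (norm_sum_le _ _).trans ?_
            refine Finset.sum_le_sum fun i _ => ?_
            rw [norm_mul]
            exact mul_le_mul_of_nonneg_right (haX i) (norm_nonneg _)
          · exact Finset.sum_nonneg fun i _ =>
              mul_nonneg (le_trans (norm_nonneg _) (haX i))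
                (norm_nonneg _)
  -- BddAbove on the closed strip
  have hB : BddAbove ((norm ∘ f) ''
      (Complex.HadamardThreeLines.verticalClosedStrip 0 1)) := by
    refine ⟨∑ j, τ j * ((∑ i, C i *
      ‖F (fun j' => if i = j' then (1:ℂ) else 0) j‖) * C' j), ?_⟩
    rintro r ⟨z, hz, rfl⟩
    simp only [Function.comp_apply]
    exact hfbound z C C' (hXle z hz) (hUle z hz)
  -- boundary at re = 0
  have hbd0 : ∀ z : ℂ, z.re = 0 → ‖f z‖ ≤ Real.sqrt k := by
    intro z hz
    have hX2 : ∑ i, d i * ‖X z i‖ ^ (2:ℝ) = 1 := by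
      rw [← hx1]
      refine Finset.sum_congr rfl fun i _ => ?_
      rw [habsX z (by rw [hz]) i, hz, ← Real.rpow_mul (norm_nonneg _)]
      congr 2
      ring
    have hU2 : ∑ j, τ j * ‖U z j‖ ^ (2:ℝ) = 1 := by
      rw [← hu1]
      refine Finset.sum_congr rfl fun j _ => ?_
      rw [habsU z (by rw [hz]) j, hz, ← Real.rpow_mul (norm_nonneg _)]
      congr 2
      ring
    calc ‖f z‖ ≤ ∑ j, ‖(τ j : ℂ) * F (X z) j * U z j‖ :=
          norm_sum_le _ _
      _ = ∑ j, τ j * (‖F (X z) j‖ * ‖U z j‖) := by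
          refine Finset.sum_congr rfl fun j _ => ?_
          rw [norm_mul, norm_mul, Complex.norm_real, Real.norm_eq_abs, abs_of_nonneg (hτ j).le, mul_assoc]
      _ ≤ Real.sqrt (∑ j, τ j * ‖F (X z) j‖ ^ (2:ℝ)) *
            Real.sqrt (∑ j, τ j * ‖U z j‖ ^ (2:ℝ)) :=
          wCS τ _ _ (fun j => (hτ j).le)
      _ ≤ Real.sqrt k := by
          rw [hU2, Real.sqrt_one, mul_one]
          refine Real.sqrt_le_sqrt ?_
          calc ∑ j, τ j * ‖F (X z) j‖ ^ (2:ℝ)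
              ≤ k * ∑ i, d i * ‖X z i‖ ^ (2:ℝ) := h2 (X z)
            _ = k := by rw [hX2, mul_one]
  -- boundary at re = 1
  have hbd1 : ∀ z : ℂ, z.re = 1 → ‖f z‖ ≤ 1 := by
    intro z hz
    have hX1 : ∑ i, d i * ‖X z i‖ = 1 := by
      rw [← hx1]
      refine Finset.sum_congr rfl fun i _ => ?_
      rw [habsX z (by rw [hz]; norm_num) i, hz]
      congr 1
      ring_nf
    have hU1 : ∑ j, τ j * ‖U z j‖ = 1 := by
      rw [← hu1]
      refine Finset.sum_congr rfl fun j _ => ?_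
      rw [habsU z (by rw [hz]; norm_num) j, hz]
      congr 1
      ring_nf
    calc ‖f z‖ ≤ ∑ j, ‖(τ j : ℂ) * F (X z) j * U z j‖ :=
          norm_sum_le _ _
      _ ≤ ∑ j, τ j * ‖U z j‖ := by
          refine Finset.sum_le_sum fun j _ => ?_
          rw [norm_mul, norm_mul, Complex.norm_real, Real.norm_eq_abs, abs_of_nonneg (hτ j).le, mul_assoc]
          refine mul_le_mul_of_nonneg_left ?_ (hτ j).le
          calc ‖F (X z) j‖ * ‖U z j‖
              ≤ 1 * ‖U z j‖ := by
                refine mul_le_mul_of_nonneg_right ?_ (norm_nonneg _)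
                rw [← hX1]
                exact h1 (X z) j
            _ = ‖U z j‖ := one_mul _
      _ = 1 := hU1
  -- Hadamard three lines
  have hzmem : ((t:ℝ):ℂ) ∈ Complex.HadamardThreeLines.verticalClosedStrip 0 1 := by
    simp only [Complex.HadamardThreeLines.verticalClosedStrip, Set.mem_preimage,
      Complex.ofReal_re, Set.mem_Icc]
    exact ⟨ht0, ht1⟩
  have hH := Complex.HadamardThreeLines.norm_le_interp_of_mem_verticalClosedStrip₀₁' f
    hzmem hf_diff.diffContOnCl hB
    (fun z hz => by
      exact hbd0 z (by simpa using hz))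
    (fun z hz => by
      exact hbd1 z (by simpa using hz))
  have hft : f ((t:ℝ):ℂ) = ∑ j, (τ j : ℂ) * F x j * u j := by
    rw [hf]
    simp only [hXt, hUt]
  rw [hft] at hH
  refine hH.trans (le_of_eq ?_)
  rw [Complex.ofReal_re, Real.one_rpow, mul_one, Real.sqrt_eq_rpow,
    ← Real.rpow_mul hk.le]
  congr 1
  rw [ht]
  ring

lemma wnorm_smul {n : ℕ} (d : Fin n → ℝ) (hd : ∀ i, 0 ≤ d i) {p : ℝ} (hp : 0 < p)
    (r : ℝ) (hr : 0 ≤ r) (x : Fin n → ℂ) :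
    wnorm d p (((r : ℝ) : ℂ) • x) = r * wnorm d p x := by
  rw [wnorm, wnorm]
  have he : ∀ i, d i * ‖(((r:ℝ):ℂ) • x) i‖ ^ p
      = r ^ p * (d i * ‖x i‖ ^ p) := by
    intro i
    rw [Pi.smul_apply, smul_eq_mul, norm_mul, Complex.norm_real, Real.norm_eq_abs, abs_of_nonneg hr,
      Real.mul_rpow hr (norm_nonneg _)]
    ring
  rw [Finset.sum_congr rfl (fun i _ => he i), ← Finset.mul_sum,
    Real.mul_rpow (Real.rpow_nonneg hr _) (sum_nn d hd _ _),
    ← Real.rpow_mul hr, mul_one_div_cancel hp.ne', Real.rpow_one]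

lemma bilinear_bound {n m : ℕ} (d : Fin n → ℝ) (τ : Fin m → ℝ)
    (hd : ∀ i, 0 < d i) (hτ : ∀ j, 0 < τ j) (k : ℝ) (hk : 0 < k)
    (F : (Fin n → ℂ) →ₗ[ℂ] (Fin m → ℂ))
    (h1 : ∀ y j, ‖F y j‖ ≤ ∑ i, d i * ‖y i‖)
    (h2 : ∀ y, ∑ j, τ j * ‖F y j‖ ^ (2:ℝ)
            ≤ k * ∑ i, d i * ‖y i‖ ^ (2:ℝ))
    (p q : ℝ) (hp : 2 ≤ p) (hpq : 1/p + 1/q = 1)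
    (x : Fin n → ℂ) (u : Fin m → ℂ) :
    ‖∑ j, (τ j : ℂ) * F x j * u j‖
      ≤ k ^ ((1:ℝ)/p) * (wnorm d q x * wnorm τ q u) := by
  have hp0 : (0:ℝ) < p := by linarith
  have h1p : 1/p ≤ 1/2 := by
    rw [div_le_div_iff₀ hp0 (by norm_num)]; linarith
  have h1q : 1/q = 1 - 1/p := by linarith
  have hq0 : (0:ℝ) < q := by
    have h01p : 0 < 1/p := by positivity
    have : 0 < 1/q := by rw [h1q]; linarith
    exact one_div_pos.mp this
  have hkp : (0:ℝ) ≤ k ^ ((1:ℝ)/p) := (Real.rpow_pos_of_pos hk _).le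
  rcases eq_or_ne (∑ i, d i * ‖x i‖ ^ q) 0 with hx0 | hx0
  · have hx00 : x = 0 := eq_zero_of_sum_eq_zero d hd hq0 x hx0
    subst hx00
    simp only [map_zero, Pi.zero_apply, zero_mul, mul_zero, Finset.sum_const_zero, map_zero, norm_zero]
    exact mul_nonneg hkp (mul_nonneg (wnorm_nonneg d (fun i => (hd i).le) _ _)
      (wnorm_nonneg τ (fun j => (hτ j).le) _ _))
  rcases eq_or_ne (∑ j, τ j * ‖u j‖ ^ q) 0 with hu0 | hu0
  · have hu00 : u = 0 := eq_zero_of_sum_eq_zero τ hτ hq0 u hu0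
    subst hu00
    simp only [Pi.zero_apply, mul_zero, Finset.sum_const_zero, map_zero, norm_zero]
    exact mul_nonneg hkp (mul_nonneg (wnorm_nonneg d (fun i => (hd i).le) _ _)
      (wnorm_nonneg τ (fun j => (hτ j).le) _ _))
  have hSx : 0 < ∑ i, d i * ‖x i‖ ^ q :=
    lt_of_le_of_ne (sum_nn d (fun i => (hd i).le) _ _) (Ne.symm hx0)
  have hSu : 0 < ∑ j, τ j * ‖u j‖ ^ q :=
    lt_of_le_of_ne (sum_nn τ (fun j => (hτ j).le) _ _) (Ne.symm hu0)
  set Nx := wnorm d q x with hNx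
  set Nu := wnorm τ q u with hNu
  have hNx0 : 0 < Nx := Real.rpow_pos_of_pos hSx _
  have hNu0 : 0 < Nu := Real.rpow_pos_of_pos hSu _
  have hNxq : Nx ^ q = ∑ i, d i * ‖x i‖ ^ q :=
    wnorm_pow d (fun i => (hd i).le) hq0 x
  have hNuq : Nu ^ q = ∑ j, τ j * ‖u j‖ ^ q :=
    wnorm_pow τ (fun j => (hτ j).le) hq0 u
  set x' : Fin n → ℂ := ((Nx⁻¹ : ℝ) : ℂ) • x with hx'
  set u' : Fin m → ℂ := ((Nu⁻¹ : ℝ) : ℂ) • u with hu'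
  have hnorm : ∀ {N : ℝ} (hN : 0 < N) {l : ℕ} (w : Fin l → ℝ) (y : Fin l → ℂ),
      N ^ q = ∑ i, w i * ‖y i‖ ^ q →
      ∑ i, w i * ‖(((N⁻¹ : ℝ) : ℂ) • y) i‖ ^ q = 1 := by
    intro N hN l w y hNq
    have : ∀ i, w i * ‖(((N⁻¹:ℝ):ℂ) • y) i‖ ^ q
        = (N ^ q)⁻¹ * (w i * ‖y i‖ ^ q) := by
      intro i
      rw [Pi.smul_apply, smul_eq_mul, norm_mul, Complex.norm_real, Real.norm_eq_abs,
        abs_of_nonneg (inv_nonneg.mpr hN.le),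
        Real.mul_rpow (inv_nonneg.mpr hN.le) (norm_nonneg _),
        Real.inv_rpow hN.le]
      ring
    rw [Finset.sum_congr rfl (fun i _ => this i), ← Finset.mul_sum, ← hNq,
      inv_mul_cancel₀ (by positivity)]
  have hx'1 : ∑ i, d i * ‖x' i‖ ^ q = 1 := hnorm hNx0 d x hNxq
  have hu'1 : ∑ j, τ j * ‖u' j‖ ^ q = 1 := hnorm hNu0 τ u hNuq
  have hkey := key_normalized d τ hd hτ k hk F h1 h2 p q hp hpq x' u' hx'1 hu'1
  have hsum' : ∑ j, (τ j : ℂ) * F x' j * u' j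
      = (((Nx⁻¹ * Nu⁻¹ : ℝ)) : ℂ) * ∑ j, (τ j : ℂ) * F x j * u j := by
    rw [Finset.mul_sum]
    refine Finset.sum_congr rfl fun j _ => ?_
    rw [hx', hu', map_smul, Pi.smul_apply, Pi.smul_apply, smul_eq_mul, smul_eq_mul]
    push_cast
    ring
  rw [hsum', norm_mul, Complex.norm_real, Real.norm_eq_abs,
    abs_of_nonneg (by positivity : (0:ℝ) ≤ Nx⁻¹ * Nu⁻¹)] at hkey
  have := mul_le_mul_of_nonneg_left hkey (by positivity : (0:ℝ) ≤ Nx * Nu)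
  calc ‖∑ j, (τ j : ℂ) * F x j * u j‖
      = Nx * Nu * (Nx⁻¹ * Nu⁻¹ * ‖∑ j, (τ j : ℂ) * F x j * u j‖) := by
        field_simp
    _ ≤ Nx * Nu * k ^ ((1:ℝ)/p) := this
    _ = k ^ ((1:ℝ)/p) * (Nx * Nu) := by ring

lemma HY {n m : ℕ} (d : Fin n → ℝ) (τ : Fin m → ℝ)
    (hd : ∀ i, 0 < d i) (hτ : ∀ j, 0 < τ j) (k : ℝ) (hk : 0 < k)
    (F : (Fin n → ℂ) →ₗ[ℂ] (Fin m → ℂ))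
    (h1 : ∀ y j, ‖F y j‖ ≤ ∑ i, d i * ‖y i‖)
    (h2 : ∀ y, ∑ j, τ j * ‖F y j‖ ^ (2:ℝ)
            ≤ k * ∑ i, d i * ‖y i‖ ^ (2:ℝ))
    (p q : ℝ) (hp : 2 ≤ p) (hpq : 1/p + 1/q = 1) (x : Fin n → ℂ) :
    wnorm τ p (F x) ≤ k ^ ((1:ℝ)/p) * wnorm d q x := by
  have hp0 : (0:ℝ) < p := by linarith
  have hp1 : (1:ℝ) < p := by linarith
  have h1p : 1/p ≤ 1/2 := by
    rw [div_le_div_iff₀ hp0 (by norm_num)]; linarith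
  have h1q : 1/q = 1 - 1/p := by linarith
  have hq0 : (0:ℝ) < q := by
    have h01p : 0 < 1/p := by positivity
    have : 0 < 1/q := by rw [h1q]; linarith
    exact one_div_pos.mp this
  refine dual_bound τ hτ p q hp1 hq0 hpq (F x) (k ^ ((1:ℝ)/p) * wnorm d q x)
    (mul_nonneg (Real.rpow_pos_of_pos hk _).le (wnorm_nonneg d (fun i => (hd i).le) _ _)) ?_
  intro u
  have := bilinear_bound d τ hd hτ k hk F h1 h2 p q hp hpq x u
  calc ‖∑ j, (τ j : ℂ) * F x j * u j‖
      ≤ k ^ ((1:ℝ)/p) * (wnorm d q x * wnorm τ q u) := this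
    _ = k ^ ((1:ℝ)/p) * wnorm d q x * wnorm τ q u := by ring

end key

end QWW

/-- Quantum Wigderson-Wigderson uncertainty principle for general conjugate
exponents, commutative finite-dimensional case. -/
theorem quantum_WW_general_exponents {n m : ℕ} (hn : 0 < n) (hm : 0 < m)
    (d : Fin n → ℝ) (τ : Fin m → ℝ) (hd : ∀ i, 0 < d i) (hτ : ∀ j, 0 < τ j)
    (k : ℝ) (hk : 0 < k)
    (F : (Fin n → ℂ) →ₗ[ℂ] (Fin m → ℂ)) (G : (Fin m → ℂ) →ₗ[ℂ] (Fin n → ℂ))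
    (hadj : IsAdjointPair d τ F G)
    (hF1 : ∀ x, inorm (F x) ≤ wnorm d 1 x)
    (hFk : ∀ x, k * inorm x ≤ inorm (G (F x)))
    (hiso : ∀ y, G (F y) = (k : ℂ) • y)
    (p q : ℝ) (hp : 2 ≤ p) (hpq : 1 / p + 1 / q = 1)
    (x : Fin n → ℂ) :
    wnorm d q x * wnorm τ q (F x) ≥ k ^ (1 - 2 / p) * (wnorm d p x * wnorm τ p (F x)) := by
  have hp0 : (0:ℝ) < p := by linarith
  -- pointwise L¹→L∞ bound for F
  have h1F : ∀ y j, ‖F y j‖ ≤ ∑ i, d i * ‖y i‖ := by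
    intro y j
    calc ‖F y j‖ ≤ inorm (F y) :=
          le_ciSup (f := fun j' => ‖F y j'‖) (Finite.bddAbove_range _) j
      _ ≤ wnorm d 1 y := hF1 y
      _ = ∑ i, d i * ‖y i‖ := QWW.wnorm_one d y
  -- Parseval / L² bound for F
  have h2F : ∀ y, ∑ j, τ j * ‖F y j‖ ^ (2:ℝ)
      ≤ k * ∑ i, d i * ‖y i‖ ^ (2:ℝ) :=
    fun y => le_of_eq (QWW.parseval d τ F G hadj k hiso y)
  -- bounds for G
  have h1G : ∀ v i, ‖G v i‖ ≤ ∑ j, τ j * ‖v j‖ :=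
    fun v i => QWW.adj_pointwise d τ F G hadj hd (fun j => (hτ j).le) h1F v i
  have h2G : ∀ v, ∑ i, d i * ‖G v i‖ ^ (2:ℝ)
      ≤ k * ∑ j, τ j * ‖v j‖ ^ (2:ℝ) :=
    fun v => QWW.adj_l2 d τ F G hadj (fun i => (hd i).le) (fun j => (hτ j).le) k hk h2F v
  -- Hausdorff-Young for F and for G
  have HYF := QWW.HY d τ hd hτ k hk F h1F h2F p q hp hpq x
  have HYG := QWW.HY τ d hτ hd k hk G h1G h2G p q hp hpq (F x)
  rw [hiso x] at HYG
  have hGsm : wnorm d p ((k:ℂ) • x) = k * wnorm d p x := by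
    rw [show ((k:ℂ) • x) = (((k:ℝ):ℂ) • x) from rfl]
    exact QWW.wnorm_smul d (fun i => (hd i).le) hp0 k hk.le x
  rw [hGsm] at HYG
  set A := wnorm τ p (F x) with hA
  set B := wnorm d p x with hB
  set Q := wnorm d q x with hQ
  set P := wnorm τ q (F x) with hP
  have hA0 : 0 ≤ A := QWW.wnorm_nonneg τ (fun j => (hτ j).le) _ _
  have hB0 : 0 ≤ B := QWW.wnorm_nonneg d (fun i => (hd i).le) _ _
  have hQ0 : 0 ≤ Q := QWW.wnorm_nonneg d (fun i => (hd i).le) _ _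
  have hP0 : 0 ≤ P := QWW.wnorm_nonneg τ (fun j => (hτ j).le) _ _
  have i3 : A * (k * B) ≤ (k ^ ((1:ℝ)/p) * Q) * (k ^ ((1:ℝ)/p) * P) :=
    mul_le_mul HYF HYG (by positivity)
      (mul_nonneg (Real.rpow_pos_of_pos hk _).le hQ0)
  have e1 : (k ^ ((1:ℝ)/p) * Q) * (k ^ ((1:ℝ)/p) * P) = k ^ ((2:ℝ)/p) * (Q * P) := by
    rw [show (2:ℝ)/p = 1/p + 1/p by ring, Real.rpow_add hk]
    ring
  have i4 : k * (A * B) ≤ k ^ ((2:ℝ)/p) * (Q * P) := by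
    calc k * (A * B) = A * (k * B) := by ring
      _ ≤ _ := i3
      _ = _ := e1
  have hk2p : (0:ℝ) < k ^ ((2:ℝ)/p) := Real.rpow_pos_of_pos hk _
  rw [ge_iff_le]
  calc k ^ (1 - 2/p) * (B * A)
      = (k ^ ((2:ℝ)/p))⁻¹ * (k * (A * B)) := by
        rw [show (1 - 2/p : ℝ) = -(2/p) + 1 by ring, Real.rpow_add hk, Real.rpow_one,
          Real.rpow_neg hk.le]
        ring
    _ ≤ (k ^ ((2:ℝ)/p))⁻¹ * (k ^ ((2:ℝ)/p) * (Q * P)) :=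
        mul_le_mul_of_nonneg_left i4 (inv_nonneg.mpr hk2p.le)
    _ = Q * P := by field_simp
end

section
/- Quantum Hirschman-Beckner uncertainty principle, commutative finite-dimensional case: if k > 0, F is a k-transform, and F* ∘ F = k • id, then for every nonzero x : Fin n → ℂ, H_d(|x|²)/‖x‖_{2,d}² + H_τ(|F x|²)/‖F x‖_{2,τ}² ≥ −log(‖x‖_{2,d}²) − log(‖F x‖_{2,τ}²) + log k. -/
open Finset

/-- Von Neumann entropy of `|x|²` with respect to the weight `d`
(the convention `0 * log 0 = 0` holds since `Real.log 0 = 0`). -/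
noncomputable def went {n : ℕ} (d : Fin n → ℝ) (x : Fin n → ℂ) : ℝ :=
  -∑ i, d i * ‖x i‖ ^ 2 * Real.log (‖x i‖ ^ 2)

noncomputable def Complex.abs : AbsoluteValue ℂ ℝ where
  toFun z := ‖z‖
  map_mul' := norm_mul
  nonneg' := norm_nonneg
  eq_zero' _ := norm_eq_zero
  add_le' := norm_add_le

lemma Complex.abs_apply (z : ℂ) : Complex.abs z = ‖z‖ := rfl

lemma Complex.norm_eq_abs (z : ℂ) : ‖z‖ = Complex.abs z := rfl

lemma Complex.abs_ofReal (r : ℝ) : Complex.abs (r : ℂ) = |r| := by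
  rw [Complex.abs_apply, Complex.norm_real, Real.norm_eq_abs]

lemma Complex.abs_exp (z : ℂ) : Complex.abs (Complex.exp z) = Real.exp z.re :=
  Complex.norm_exp z

lemma Complex.abs_conj (z : ℂ) : Complex.abs ((starRingEnd ℂ) z) = Complex.abs z :=
  Complex.norm_conj z

lemma conjmul (z : ℂ) : (starRingEnd ℂ) z * z = ((Complex.abs z ^ 2 : ℝ) : ℂ) := by
  rw [mul_comm, Complex.mul_conj']
  norm_cast

/-- Parseval-type identity. -/
lemma parseval {n m : ℕ} {d : Fin n → ℝ} {τ : Fin m → ℝ} {k : ℝ}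
    {F : (Fin n → ℂ) →ₗ[ℂ] (Fin m → ℂ)} {G : (Fin m → ℂ) →ₗ[ℂ] (Fin n → ℂ)}
    (hadj : IsAdjointPair d τ F G) (hiso : ∀ y, G (F y) = (k : ℂ) • y)
    (u : Fin n → ℂ) :
    ∑ j, τ j * Complex.abs (F u j) ^ 2 = k * ∑ i, d i * Complex.abs (u i) ^ 2 := by
  have h := hadj u (F u)
  rw [hiso] at h
  have hL : ∑ j, (τ j : ℂ) * (starRingEnd ℂ) (F u j) * F u j
      = ((∑ j, τ j * Complex.abs (F u j) ^ 2 : ℝ) : ℂ) := by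
    push_cast
    refine Finset.sum_congr rfl fun j _ => ?_
    rw [mul_assoc, conjmul]
    push_cast
    ring
  have hR : ∑ i, (d i : ℂ) * (starRingEnd ℂ) (u i) * ((k : ℂ) • u) i
      = ((k * ∑ i, d i * Complex.abs (u i) ^ 2 : ℝ) : ℂ) := by
    push_cast
    rw [Finset.mul_sum]
    refine Finset.sum_congr rfl fun i _ => ?_
    simp only [Pi.smul_apply, smul_eq_mul]
    calc (d i : ℂ) * (starRingEnd ℂ) (u i) * ((k:ℂ) * u i)
        = (k : ℂ) * (d i : ℂ) * ((starRingEnd ℂ) (u i) * u i) := by ring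
      _ = (k : ℂ) * ((d i : ℂ) * (Complex.abs (u i) : ℂ) ^ 2) := by
          rw [conjmul]; push_cast; ring
  rw [hL, hR] at h
  exact_mod_cast h

/-- pointwise L¹→L∞ bound -/
lemma pointwise_bound {n m : ℕ} {d : Fin n → ℝ}
    {F : (Fin n → ℂ) →ₗ[ℂ] (Fin m → ℂ)}
    (hF1 : ∀ x, inorm (F x) ≤ wnorm d 1 x) (u : Fin n → ℂ) (j : Fin m) :
    Complex.abs (F u j) ≤ ∑ i, d i * Complex.abs (u i) := by
  have h1 : Complex.abs (F u j) ≤ inorm (F u) := by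
    unfold inorm
    exact le_ciSup (f := fun j => Complex.abs (F u j))
      (Set.Finite.bddAbove (Set.finite_range _)) j
  refine h1.trans ((hF1 u).trans_eq ?_)
  unfold wnorm
  rw [one_div_one, Real.rpow_one]
  refine Finset.sum_congr rfl fun i _ => by rw [Real.rpow_one]; rfl

noncomputable def md (p : ℝ) (w : ℂ) (z : ℂ) : ℂ :=
  w * Complex.exp ((↑p * (1 - z / 2) - 1) * (Real.log (Complex.abs w) : ℂ))

lemma md_re (p c : ℝ) (z : ℂ) :
    (((↑p * (1 - z / 2) - 1) * (c : ℂ))).re = (p * (1 - z.re / 2) - 1) * c := by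
  simp [Complex.mul_re, Complex.sub_re, Complex.one_re, Complex.sub_im, Complex.one_im,
    Complex.div_ofNat_re, Complex.div_ofNat_im, Complex.ofReal_re, Complex.ofReal_im]

lemma md_diff (p : ℝ) (w : ℂ) : Differentiable ℂ (md p w) := by
  unfold md
  apply Differentiable.const_mul
  apply Differentiable.cexp
  apply Differentiable.mul_const
  apply Differentiable.sub_const
  apply Differentiable.const_mul
  exact (differentiable_const _).sub (differentiable_id.div_const 2)

lemma md_abs {p : ℝ} (hp : 0 < p) (w : ℂ) {z : ℂ} (h1 : z.re ≤ 1) :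
    Complex.abs (md p w z) = Complex.abs w ^ (p * (1 - z.re / 2)) := by
  have he : 0 < p * (1 - z.re / 2) := by
    apply mul_pos hp; linarith
  by_cases hw : w = 0
  · simp [md, hw, Real.zero_rpow he.ne']
  · have hw' : 0 < Complex.abs w := by
      simpa [AbsoluteValue.pos_iff] using hw
    rw [md, map_mul, Complex.abs_exp, md_re]
    rw [Real.rpow_def_of_pos hw']
    rw [mul_comm (Real.log (Complex.abs w))]
    have : Complex.abs w = Real.exp (1 * Real.log (Complex.abs w)) := by
      rw [one_mul, Real.exp_log hw']
    nth_rewrite 1 [this]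
    rw [← Real.exp_add]
    congr 1
    ring

lemma md_theta {p θ : ℝ} (hpθ : p * (1 - θ / 2) = 1) (w : ℂ) : md p w (θ : ℂ) = w := by
  have : ((p : ℂ) * (1 - (θ:ℂ) / 2) - 1) = 0 := by
    have : ((p : ℂ) * (1 - (θ:ℂ) / 2)) = ((p * (1 - θ/2) : ℝ) : ℂ) := by push_cast; ring
    rw [this, hpθ]
    simp
  simp [md, this]

lemma rpow_le_add {a e p : ℝ} (ha : 0 ≤ a) (h1 : p/2 ≤ e) (h2 : e ≤ p) :
    a ^ e ≤ a ^ (p/2) + a ^ p := by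
  rcases le_or_gt a 1 with h | h
  · rcases eq_or_lt_of_le ha with h0 | h0
    · rcases eq_or_ne e 0 with he | he
      · rw [← h0, he, Real.rpow_zero]
        rcases eq_or_ne p 0 with hp | hp
        · rw [hp]; norm_num
        · have : p / 2 ≠ 0 := by simpa using hp
          rw [Real.zero_rpow hp, Real.zero_rpow this]
          exact absurd (le_antisymm (by linarith) (by linarith)) hp
      · rw [← h0, Real.zero_rpow he]
        positivity
    · have : a ^ e ≤ a ^ (p/2) := Real.rpow_le_rpow_of_exponent_ge h0 h h1
      have h2 : 0 ≤ a ^ p := Real.rpow_nonneg ha p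
      linarith
  · have : a ^ e ≤ a ^ p := Real.rpow_le_rpow_of_exponent_le h.le h2
    have h2 : 0 ≤ a ^ (p/2) := Real.rpow_nonneg ha _
    linarith

lemma neg_half_re (c : ℝ) (z : ℂ) : ((-(z/2)) * (c : ℂ)).re = -(z.re/2) * c := by
  simp [Complex.mul_re, Complex.neg_re, Complex.neg_im, Complex.div_ofNat_re,
    Complex.div_ofNat_im, Complex.ofReal_re, Complex.ofReal_im]

lemma three_lines_core {n m : ℕ} (d : Fin n → ℝ) (τ : Fin m → ℝ)
    (hd : ∀ i, 0 < d i) (hτ : ∀ j, 0 < τ j) (k : ℝ) (hk : 0 < k)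
    (F : (Fin n → ℂ) →ₗ[ℂ] (Fin m → ℂ))
    (hb1 : ∀ u j, Complex.abs (F u j) ≤ ∑ i, d i * Complex.abs (u i))
    (hb2 : ∀ u, ∑ j, τ j * Complex.abs (F u j) ^ 2 = k * ∑ i, d i * Complex.abs (u i) ^ 2)
    {θ p : ℝ} (hθ0 : 0 < θ) (hθ1 : θ < 1) (hp : p * (1 - θ/2) = 1) (hp0 : 0 < p)
    (x : Fin n → ℂ) (y : Fin m → ℂ)
    (hxn : ∑ i, d i * Complex.abs (x i) ^ p = 1)
    (hyn : ∑ j, τ j * Complex.abs (y j) ^ p = 1) :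
    Complex.abs (∑ j, (τ j : ℂ) * F x j * y j) ≤ Real.exp (θ/2 * Real.log k) := by
  classical
  set X : ℂ → (Fin n → ℂ) := fun z i => md p (x i) z with hX
  set Y : ℂ → (Fin m → ℂ) := fun z j => md p (y j) z with hY
  set Φ : ℂ → ℂ :=
    fun z => Complex.exp (-(z/2) * (Real.log k : ℂ)) * ∑ j, (τ j : ℂ) * F (X z) j * Y z j
    with hΦdef
  -- differentiability
  have hXdiff : Differentiable ℂ X := differentiable_pi.mpr fun i => md_diff p (x i)
  have hFXdiff : ∀ j, Differentiable ℂ (fun z => F (X z) j) := by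
    have h1 : Differentiable ℂ (fun z => (LinearMap.toContinuousLinearMap F) (X z)) :=
      (LinearMap.toContinuousLinearMap F).differentiable.comp hXdiff
    intro j
    exact (differentiable_pi.mp h1) j
  have hΦ : Differentiable ℂ Φ := by
    apply Differentiable.mul
    · apply Differentiable.cexp
      exact ((differentiable_id.div_const 2).neg).mul_const _
    · apply Differentiable.fun_sum
      intro j _
      exact (((differentiable_const _).mul (hFXdiff j)).mul (md_diff p (y j)))
  -- the exponential prefactor
  have habs_pre : ∀ z : ℂ, Complex.abs (Complex.exp (-(z/2) * (Real.log k : ℂ)))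
      = Real.exp (-(z.re/2) * Real.log k) := by
    intro z
    rw [Complex.abs_exp, neg_half_re]
  -- generic bound on the sum by weighted products of moduli
  have hsum_bound : ∀ z : ℂ, Complex.abs (∑ j, (τ j : ℂ) * F (X z) j * Y z j)
      ≤ ∑ j, τ j * (Complex.abs (F (X z) j) * Complex.abs (Y z j)) := by
    intro z
    refine (Complex.abs.sum_le _ _).trans_eq ?_
    refine Finset.sum_congr rfl fun j _ => ?_
    rw [map_mul, map_mul, Complex.abs_ofReal, abs_of_pos (hτ j), mul_assoc]
  -- moduli of X and Y on the strip
  have habsX : ∀ (z : ℂ), z.re ≤ 1 → ∀ i,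
      Complex.abs (X z i) = Complex.abs (x i) ^ (p * (1 - z.re/2)) := fun z hz i =>
    md_abs hp0 (x i) hz
  have habsY : ∀ (z : ℂ), z.re ≤ 1 → ∀ j,
      Complex.abs (Y z j) = Complex.abs (y j) ^ (p * (1 - z.re/2)) := fun z hz j =>
    md_abs hp0 (y j) hz
  -- boundary bound at re = 0
  have hbd0 : ∀ z : ℂ, z.re = 0 → Complex.abs (Φ z) ≤ 1 := by
    intro z hz
    rw [hΦdef]
    simp only [map_mul]
    rw [habs_pre, hz]
    norm_num
    calc Complex.abs (∑ j, (τ j : ℂ) * F (X z) j * Y z j)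
        ≤ ∑ j, τ j * (Complex.abs (F (X z) j) * Complex.abs (Y z j)) := hsum_bound z
      _ ≤ ∑ j, τ j * ((∑ i, d i * Complex.abs (x i) ^ p) * Complex.abs (y j) ^ p) := by
          refine Finset.sum_le_sum fun j _ => ?_
          refine mul_le_mul_of_nonneg_left ?_ (hτ j).le
          have h1 : Complex.abs (F (X z) j) ≤ ∑ i, d i * Complex.abs (x i) ^ p := by
            refine (hb1 (X z) j).trans_eq ?_
            refine Finset.sum_congr rfl fun i _ => ?_
            rw [habsX z (by rw [hz]; norm_num) i, hz]
            norm_num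
          have h2 : Complex.abs (Y z j) = Complex.abs (y j) ^ p := by
            rw [habsY z (by rw [hz]; norm_num) j, hz]
            norm_num
          rw [h2]
          exact mul_le_mul_of_nonneg_right h1 (Real.rpow_nonneg (Complex.abs.nonneg _) _)
      _ = (∑ i, d i * Complex.abs (x i) ^ p) * ∑ j, τ j * Complex.abs (y j) ^ p := by
          rw [Finset.mul_sum]
          refine Finset.sum_congr rfl fun j _ => by ring
      _ = 1 := by rw [hxn, hyn, one_mul]
  -- boundary bound at re = 1
  have hbd1 : ∀ z : ℂ, z.re = 1 → Complex.abs (Φ z) ≤ 1 := by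
    intro z hz
    have hz1 : z.re ≤ 1 := le_of_eq hz
    have hXsq : ∀ i, Complex.abs (X z i) ^ 2 = Complex.abs (x i) ^ p := by
      intro i
      rw [habsX z hz1 i, hz]
      rw [← Real.rpow_natCast (Complex.abs (x i) ^ (p * (1 - 1/2))) 2,
        ← Real.rpow_mul (Complex.abs.nonneg _)]
      congr 1
      ring
    have hYsq : ∀ j, Complex.abs (Y z j) ^ 2 = Complex.abs (y j) ^ p := by
      intro j
      rw [habsY z hz1 j, hz]
      rw [← Real.rpow_natCast (Complex.abs (y j) ^ (p * (1 - 1/2))) 2,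
        ← Real.rpow_mul (Complex.abs.nonneg _)]
      congr 1
      ring
    have hFX2 : ∑ j, τ j * Complex.abs (F (X z) j) ^ 2 = k := by
      rw [hb2 (X z)]
      have : ∑ i, d i * Complex.abs (X z i) ^ 2 = 1 := by
        rw [← hxn]
        exact Finset.sum_congr rfl fun i _ => by rw [hXsq i]
      rw [this, mul_one]
    have hY2 : ∑ j, τ j * Complex.abs (Y z j) ^ 2 = 1 := by
      rw [← hyn]
      exact Finset.sum_congr rfl fun j _ => by rw [hYsq j]
    rw [hΦdef]
    simp only [map_mul]
    rw [habs_pre, hz]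
    have hcs : Complex.abs (∑ j, (τ j : ℂ) * F (X z) j * Y z j)
        ≤ Real.sqrt k := by
      calc Complex.abs (∑ j, (τ j : ℂ) * F (X z) j * Y z j)
          ≤ ∑ j, τ j * (Complex.abs (F (X z) j) * Complex.abs (Y z j)) := hsum_bound z
        _ = ∑ j, (Real.sqrt (τ j) * Complex.abs (F (X z) j))
              * (Real.sqrt (τ j) * Complex.abs (Y z j)) := by
            refine Finset.sum_congr rfl fun j _ => ?_
            have h : τ j = Real.sqrt (τ j) * Real.sqrt (τ j) :=
              (Real.mul_self_sqrt (hτ j).le).symm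
            nth_rewrite 1 [h]
            ring
        _ ≤ Real.sqrt (∑ j, (Real.sqrt (τ j) * Complex.abs (F (X z) j)) ^ 2)
              * Real.sqrt (∑ j, (Real.sqrt (τ j) * Complex.abs (Y z j)) ^ 2) :=
            Real.sum_mul_le_sqrt_mul_sqrt _ _ _
        _ = Real.sqrt k * Real.sqrt 1 := by
            congr 1
            · congr 1
              rw [← hFX2]
              refine Finset.sum_congr rfl fun j _ => ?_
              rw [mul_pow, Real.sq_sqrt (hτ j).le]
            · congr 1
              rw [← hY2]
              refine Finset.sum_congr rfl fun j _ => ?_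
              rw [mul_pow, Real.sq_sqrt (hτ j).le]
        _ = Real.sqrt k := by rw [Real.sqrt_one, mul_one]
    calc Real.exp (-(1/2) * Real.log k) * Complex.abs (∑ j, (τ j : ℂ) * F (X z) j * Y z j)
        ≤ Real.exp (-(1/2) * Real.log k) * Real.sqrt k :=
          mul_le_mul_of_nonneg_left hcs (Real.exp_nonneg _)
      _ = 1 := by
          rw [Real.sqrt_eq_rpow, Real.rpow_def_of_pos hk, ← Real.exp_add]
          rw [show -(1/2 : ℝ) * Real.log k + Real.log k * (1/2) = 0 by ring]
          exact Real.exp_zero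
  -- global bound on the strip (for the growth condition)
  have hC : ∃ C : ℝ, ∀ z : ℂ, z.re ∈ Set.Icc (0:ℝ) 1 → Complex.abs (Φ z) ≤ C := by
    refine ⟨Real.exp |Real.log k| * ∑ j, τ j *
      ((∑ i, d i * (Complex.abs (x i) ^ (p/2) + Complex.abs (x i) ^ p))
        * (Complex.abs (y j) ^ (p/2) + Complex.abs (y j) ^ p)), ?_⟩
    intro z hz
    obtain ⟨hz0, hz1⟩ := hz
    have hexp : p/2 ≤ p * (1 - z.re/2) ∧ p * (1 - z.re/2) ≤ p := by
      constructor <;> nlinarith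
    rw [hΦdef]
    simp only [map_mul]
    rw [habs_pre]
    have h1 : Real.exp (-(z.re/2) * Real.log k) ≤ Real.exp |Real.log k| := by
      apply Real.exp_le_exp.mpr
      rcases abs_cases (Real.log k) with ⟨h, _⟩ | ⟨h, _⟩ <;> nlinarith [abs_nonneg (Real.log k)]
    refine mul_le_mul h1 ?_ (Complex.abs.nonneg _) (Real.exp_nonneg _)
    calc Complex.abs (∑ j, (τ j : ℂ) * F (X z) j * Y z j)
        ≤ ∑ j, τ j * (Complex.abs (F (X z) j) * Complex.abs (Y z j)) := hsum_bound z
      _ ≤ ∑ j, τ j *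
            ((∑ i, d i * (Complex.abs (x i) ^ (p/2) + Complex.abs (x i) ^ p))
              * (Complex.abs (y j) ^ (p/2) + Complex.abs (y j) ^ p)) := by
          refine Finset.sum_le_sum fun j _ => ?_
          refine mul_le_mul_of_nonneg_left ?_ (hτ j).le
          have hFb : Complex.abs (F (X z) j)
              ≤ ∑ i, d i * (Complex.abs (x i) ^ (p/2) + Complex.abs (x i) ^ p) := by
            refine (hb1 (X z) j).trans ?_
            refine Finset.sum_le_sum fun i _ => ?_
            refine mul_le_mul_of_nonneg_left ?_ (hd i).le
            rw [habsX z hz1 i]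
            exact rpow_le_add (Complex.abs.nonneg _) hexp.1 hexp.2
          have hYb : Complex.abs (Y z j)
              ≤ Complex.abs (y j) ^ (p/2) + Complex.abs (y j) ^ p := by
            rw [habsY z hz1 j]
            exact rpow_le_add (Complex.abs.nonneg _) hexp.1 hexp.2
          exact mul_le_mul hFb hYb (Complex.abs.nonneg _)
            (Finset.sum_nonneg fun i _ => mul_nonneg (hd i).le (by positivity))
  -- Phragmén–Lindelöf
  obtain ⟨C, hCb⟩ := hC
  have hPL : Complex.abs (Φ (θ : ℂ)) ≤ 1 := by
    rw [← Complex.norm_eq_abs]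
    refine PhragmenLindelof.vertical_strip (a := 0) (b := 1)
      (hΦ.diffContOnCl) ?_ (fun z hz => by rw [Complex.norm_eq_abs]; exact hbd0 z hz)
      (fun z hz => by rw [Complex.norm_eq_abs]; exact hbd1 z hz) ?_ ?_
    · refine ⟨0, by positivity, 0, ?_⟩
      rw [Asymptotics.isBigO_iff]
      refine ⟨C, ?_⟩
      rw [Filter.eventually_inf_principal]
      refine Filter.Eventually.of_forall fun z hz => ?_
      simp only [Set.mem_preimage, Set.mem_Ioo] at hz
      have := hCb z ⟨hz.1.le, hz.2.le⟩
      rw [Complex.norm_eq_abs]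
      simpa using this
    · simpa using hθ0.le
    · simpa using hθ1.le
  -- evaluate at θ
  have hXθ : X (θ : ℂ) = x := funext fun i => md_theta hp (x i)
  have hYθ : Y (θ : ℂ) = y := funext fun j => md_theta hp (y j)
  rw [hΦdef] at hPL
  simp only [hXθ, hYθ, map_mul, habs_pre] at hPL
  have hre : (Complex.ofReal θ).re = θ := rfl
  rw [hre] at hPL
  have hpos : 0 < Real.exp (-(θ/2) * Real.log k) := Real.exp_pos _
  calc Complex.abs (∑ j, (τ j : ℂ) * F x j * y j)
      = (Real.exp (-(θ/2) * Real.log k) * Complex.abs (∑ j, (τ j : ℂ) * F x j * y j))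
        / Real.exp (-(θ/2) * Real.log k) := by field_simp
    _ ≤ 1 / Real.exp (-(θ/2) * Real.log k) := by
        apply div_le_div_of_nonneg_right hPL hpos.le
    _ = Real.exp (θ/2 * Real.log k) := by
        rw [one_div, ← Real.exp_neg]
        ring_nf

lemma bilinear_bound {n m : ℕ} (d : Fin n → ℝ) (τ : Fin m → ℝ)
    (hd : ∀ i, 0 < d i) (hτ : ∀ j, 0 < τ j) (k : ℝ) (hk : 0 < k)
    (F : (Fin n → ℂ) →ₗ[ℂ] (Fin m → ℂ))
    (hb1 : ∀ u j, Complex.abs (F u j) ≤ ∑ i, d i * Complex.abs (u i))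
    (hb2 : ∀ u, ∑ j, τ j * Complex.abs (F u j) ^ 2 = k * ∑ i, d i * Complex.abs (u i) ^ 2)
    {θ p : ℝ} (hθ0 : 0 < θ) (hθ1 : θ < 1) (hp : p * (1 - θ/2) = 1) (hp0 : 0 < p)
    (x : Fin n → ℂ) (y : Fin m → ℂ) :
    Complex.abs (∑ j, (τ j : ℂ) * F x j * y j)
      ≤ Real.exp (θ/2 * Real.log k) * (∑ i, d i * Complex.abs (x i) ^ p) ^ (1/p)
          * (∑ j, τ j * Complex.abs (y j) ^ p) ^ (1/p) := by
  have habsnn : ∀ w : ℂ, 0 ≤ Complex.abs w := fun w => Complex.abs.nonneg w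
  have hSx_nn : 0 ≤ ∑ i, d i * Complex.abs (x i) ^ p :=
    Finset.sum_nonneg fun i _ => mul_nonneg (hd i).le (Real.rpow_nonneg (habsnn _) _)
  have hSy_nn : 0 ≤ ∑ j, τ j * Complex.abs (y j) ^ p :=
    Finset.sum_nonneg fun j _ => mul_nonneg (hτ j).le (Real.rpow_nonneg (habsnn _) _)
  have hRHS_nn : 0 ≤ Real.exp (θ/2 * Real.log k)
      * (∑ i, d i * Complex.abs (x i) ^ p) ^ (1/p)
      * (∑ j, τ j * Complex.abs (y j) ^ p) ^ (1/p) :=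
    mul_nonneg (mul_nonneg (Real.exp_nonneg _) (Real.rpow_nonneg hSx_nn _))
      (Real.rpow_nonneg hSy_nn _)
  by_cases hx : x = 0
  · have h0 : (∑ j, (τ j : ℂ) * F x j * y j) = 0 := by
      rw [hx, map_zero]
      simp
    rw [h0, map_zero]
    exact hRHS_nn
  by_cases hy : y = 0
  · have h0 : (∑ j, (τ j : ℂ) * F x j * y j) = 0 := by
      rw [hy]
      simp
    rw [h0, map_zero]
    exact hRHS_nn
  -- positivity of the normalization constants
  obtain ⟨i0, hi0⟩ : ∃ i, x i ≠ 0 := by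
    by_contra h
    push_neg at h
    exact hx (funext h)
  obtain ⟨j0, hj0⟩ : ∃ j, y j ≠ 0 := by
    by_contra h
    push_neg at h
    exact hy (funext h)
  have hSx : 0 < ∑ i, d i * Complex.abs (x i) ^ p := by
    refine Finset.sum_pos' (fun i _ => mul_nonneg (hd i).le (Real.rpow_nonneg (habsnn _) _))
      ⟨i0, Finset.mem_univ _, ?_⟩
    have : 0 < Complex.abs (x i0) := by simpa [AbsoluteValue.pos_iff] using hi0
    exact mul_pos (hd i0) (Real.rpow_pos_of_pos this _)
  have hSy : 0 < ∑ j, τ j * Complex.abs (y j) ^ p := by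
    refine Finset.sum_pos' (fun j _ => mul_nonneg (hτ j).le (Real.rpow_nonneg (habsnn _) _))
      ⟨j0, Finset.mem_univ _, ?_⟩
    have : 0 < Complex.abs (y j0) := by simpa [AbsoluteValue.pos_iff] using hj0
    exact mul_pos (hτ j0) (Real.rpow_pos_of_pos this _)
  set Sx := ∑ i, d i * Complex.abs (x i) ^ p with hSxdef
  set Sy := ∑ j, τ j * Complex.abs (y j) ^ p with hSydef
  set cx := Sx ^ (1/p) with hcxdef
  set cy := Sy ^ (1/p) with hcydef
  have hcx : 0 < cx := Real.rpow_pos_of_pos hSx _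
  have hcy : 0 < cy := Real.rpow_pos_of_pos hSy _
  have hcxp : cx ^ p = Sx := by
    rw [hcxdef, ← Real.rpow_mul hSx.le, one_div, inv_mul_cancel₀ hp0.ne', Real.rpow_one]
  have hcyp : cy ^ p = Sy := by
    rw [hcydef, ← Real.rpow_mul hSy.le, one_div, inv_mul_cancel₀ hp0.ne', Real.rpow_one]
  set x' : Fin n → ℂ := fun i => ((cx : ℂ))⁻¹ * x i with hx'def
  set y' : Fin m → ℂ := fun j => ((cy : ℂ))⁻¹ * y j with hy'def
  have habsx' : ∀ i, Complex.abs (x' i) = cx⁻¹ * Complex.abs (x i) := by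
    intro i
    rw [hx'def]
    simp [map_mul, map_inv₀, Complex.abs_ofReal, abs_of_pos hcx]
  have habsy' : ∀ j, Complex.abs (y' j) = cy⁻¹ * Complex.abs (y j) := by
    intro j
    rw [hy'def]
    simp [map_mul, map_inv₀, Complex.abs_ofReal, abs_of_pos hcy]
  have hxn' : ∑ i, d i * Complex.abs (x' i) ^ p = 1 := by
    have : ∀ i, d i * Complex.abs (x' i) ^ p = Sx⁻¹ * (d i * Complex.abs (x i) ^ p) := by
      intro i
      rw [habsx' i, Real.mul_rpow (inv_nonneg.mpr hcx.le) (habsnn _),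
        Real.inv_rpow hcx.le, hcxp]
      ring
    rw [Finset.sum_congr rfl fun i _ => this i, ← Finset.mul_sum, ← hSxdef,
      inv_mul_cancel₀ hSx.ne']
  have hyn' : ∑ j, τ j * Complex.abs (y' j) ^ p = 1 := by
    have : ∀ j, τ j * Complex.abs (y' j) ^ p = Sy⁻¹ * (τ j * Complex.abs (y j) ^ p) := by
      intro j
      rw [habsy' j, Real.mul_rpow (inv_nonneg.mpr hcy.le) (habsnn _),
        Real.inv_rpow hcy.le, hcyp]
      ring
    rw [Finset.sum_congr rfl fun j _ => this j, ← Finset.mul_sum, ← hSydef,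
      inv_mul_cancel₀ hSy.ne']
  have hcore := three_lines_core d τ hd hτ k hk F hb1 hb2 hθ0 hθ1 hp hp0 x' y' hxn' hyn'
  have hFx' : F x' = fun j => ((cx : ℂ))⁻¹ * F x j := by
    have : x' = ((cx : ℂ))⁻¹ • x := by
      funext i
      simp [hx'def, smul_eq_mul]
    rw [this, map_smul]
    funext j
    simp [smul_eq_mul]
  have hsum' : ∑ j, (τ j : ℂ) * F x' j * y' j
      = ((cx : ℂ))⁻¹ * ((cy : ℂ))⁻¹ * ∑ j, (τ j : ℂ) * F x j * y j := by
    rw [Finset.mul_sum]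
    refine Finset.sum_congr rfl fun j _ => ?_
    rw [hFx', hy'def]
    ring
  rw [hsum'] at hcore
  rw [map_mul, map_mul, map_inv₀, map_inv₀, Complex.abs_ofReal, Complex.abs_ofReal,
    abs_of_pos hcx, abs_of_pos hcy] at hcore
  have h2 : Complex.abs (∑ j, (τ j : ℂ) * F x j * y j)
      ≤ Real.exp (θ/2 * Real.log k) * cx * cy := by
    have := mul_le_mul_of_nonneg_left hcore (mul_nonneg hcx.le hcy.le)
    calc Complex.abs (∑ j, (τ j : ℂ) * F x j * y j)
        = cx * cy * (cx⁻¹ * (cy⁻¹ * Complex.abs (∑ j, (τ j : ℂ) * F x j * y j))) := by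
          field_simp
      _ ≤ cx * cy * Real.exp (θ/2 * Real.log k) := by
          refine mul_le_mul_of_nonneg_left ?_ (mul_nonneg hcx.le hcy.le)
          calc cx⁻¹ * (cy⁻¹ * Complex.abs (∑ j, (τ j : ℂ) * F x j * y j))
              = cx⁻¹ * cy⁻¹ * Complex.abs (∑ j, (τ j : ℂ) * F x j * y j) := by ring
            _ ≤ Real.exp (θ/2 * Real.log k) := hcore
      _ = Real.exp (θ/2 * Real.log k) * cx * cy := by ring
  exact h2

lemma HY_log {n m : ℕ} (d : Fin n → ℝ) (τ : Fin m → ℝ)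
    (hd : ∀ i, 0 < d i) (hτ : ∀ j, 0 < τ j) (k : ℝ) (hk : 0 < k)
    (F : (Fin n → ℂ) →ₗ[ℂ] (Fin m → ℂ))
    (hb1 : ∀ u j, Complex.abs (F u j) ≤ ∑ i, d i * Complex.abs (u i))
    (hb2 : ∀ u, ∑ j, τ j * Complex.abs (F u j) ^ 2 = k * ∑ i, d i * Complex.abs (u i) ^ 2)
    (x : Fin n → ℂ) (hx : x ≠ 0) (hf : F x ≠ 0)
    {θ : ℝ} (hθ0 : 0 < θ) (hθ1 : θ < 1) :
    θ/2 * Real.log (∑ j, τ j * Complex.abs (F x j) ^ (2/θ))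
      ≤ θ/2 * Real.log k
        + (2-θ)/2 * Real.log (∑ i, d i * Complex.abs (x i) ^ (2/(2-θ))) := by
  have habsnn : ∀ w : ℂ, 0 ≤ Complex.abs w := fun w => Complex.abs.nonneg w
  set p : ℝ := 2/(2-θ) with hpdef
  set q : ℝ := 2/θ with hqdef
  have h2θ : (0:ℝ) < 2 - θ := by linarith
  have hp0 : 0 < p := by positivity
  have hq0 : 0 < q := by positivity
  have hp : p * (1 - θ/2) = 1 := by
    rw [hpdef]
    field_simp
  have hqp : (q - 1) * p = q := by
    rw [hpdef, hqdef]
    field_simp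
  set f := F x with hfdef
  set y : Fin m → ℂ :=
    fun j => (starRingEnd ℂ) (f j) * ((Complex.abs (f j) ^ (q - 2) : ℝ) : ℂ) with hydef
  have habsy : ∀ j, Complex.abs (y j) = Complex.abs (f j) ^ (q - 1) := by
    intro j
    by_cases hfj : f j = 0
    · have hq1 : 1 < q := by
        rw [hqdef, lt_div_iff₀ hθ0]
        linarith
      rw [hydef]
      simp only [hfj, map_zero, zero_mul]
      rw [Real.zero_rpow (sub_ne_zero.mpr hq1.ne')]
    · have hfj' : 0 < Complex.abs (f j) := by simpa [AbsoluteValue.pos_iff] using hfj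
      rw [hydef, map_mul, Complex.abs_ofReal, abs_of_nonneg (Real.rpow_nonneg (habsnn _) _)]
      rw [Complex.abs_conj]
      nth_rewrite 1 [← Real.rpow_one (Complex.abs (f j))]
      rw [← Real.rpow_add hfj']
      congr 1
      ring
  have hterm : ∀ j, (τ j : ℂ) * f j * y j = ((τ j * Complex.abs (f j) ^ q : ℝ) : ℂ) := by
    intro j
    by_cases hfj : f j = 0
    · rw [hydef]
      simp only [hfj, map_zero, mul_zero, zero_mul]
      rw [Real.zero_rpow hq0.ne']
      simp
    · have hfj' : 0 < Complex.abs (f j) := by simpa [AbsoluteValue.pos_iff] using hfj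
      rw [hydef]
      have : f j * ((starRingEnd ℂ) (f j) * ((Complex.abs (f j) ^ (q - 2) : ℝ) : ℂ))
          = ((Complex.abs (f j) ^ 2 : ℝ) : ℂ) * ((Complex.abs (f j) ^ (q - 2) : ℝ) : ℂ) := by
        rw [← mul_assoc, Complex.mul_conj']
        norm_cast
      rw [mul_assoc, this, ← Complex.ofReal_mul, ← Complex.ofReal_mul]
      congr 1
      rw [← Real.rpow_natCast (Complex.abs (f j)) 2, ← Real.rpow_add hfj']
      rw [show ((2:ℕ):ℝ) + (q - 2) = q by push_cast; ring]
  have hsum : (∑ j, (τ j : ℂ) * F x j * y j) = ((∑ j, τ j * Complex.abs (f j) ^ q : ℝ) : ℂ) := by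
    rw [Complex.ofReal_sum]
    exact Finset.sum_congr rfl fun j _ => hterm j
  set B := ∑ j, τ j * Complex.abs (f j) ^ q with hBdef
  set A := ∑ i, d i * Complex.abs (x i) ^ p with hAdef
  have hB_pos : 0 < B := by
    obtain ⟨j0, hj0⟩ : ∃ j, f j ≠ 0 := by
      by_contra h
      push_neg at h
      exact hf (funext h)
    refine Finset.sum_pos' (fun j _ => mul_nonneg (hτ j).le (Real.rpow_nonneg (habsnn _) _))
      ⟨j0, Finset.mem_univ _, ?_⟩
    have : 0 < Complex.abs (f j0) := by simpa [AbsoluteValue.pos_iff] using hj0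
    exact mul_pos (hτ j0) (Real.rpow_pos_of_pos this _)
  have hA_pos : 0 < A := by
    obtain ⟨i0, hi0⟩ : ∃ i, x i ≠ 0 := by
      by_contra h
      push_neg at h
      exact hx (funext h)
    refine Finset.sum_pos' (fun i _ => mul_nonneg (hd i).le (Real.rpow_nonneg (habsnn _) _))
      ⟨i0, Finset.mem_univ _, ?_⟩
    have : 0 < Complex.abs (x i0) := by simpa [AbsoluteValue.pos_iff] using hi0
    exact mul_pos (hd i0) (Real.rpow_pos_of_pos this _)
  have hyp : ∑ j, τ j * Complex.abs (y j) ^ p = B := by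
    rw [hBdef]
    refine Finset.sum_congr rfl fun j _ => ?_
    rw [habsy j, ← Real.rpow_mul (habsnn _), hqp]
  have h1p : 1/p = (2-θ)/2 := by
    rw [hpdef]
    field_simp
  have hbil := bilinear_bound d τ hd hτ k hk F hb1 hb2 hθ0 hθ1 hp hp0 x y
  rw [hsum, Complex.abs_ofReal, abs_of_pos hB_pos, hyp, h1p] at hbil
  have hkey : B ^ (θ/2) ≤ Real.exp (θ/2 * Real.log k) * A ^ ((2-θ)/2) := by
    have hBp : 0 < B ^ ((2-θ)/2) := Real.rpow_pos_of_pos hB_pos _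
    refine le_of_mul_le_mul_right ?_ hBp
    calc B ^ (θ/2) * B ^ ((2-θ)/2) = B := by
          rw [← Real.rpow_add hB_pos, show θ/2 + (2-θ)/2 = 1 by ring, Real.rpow_one]
      _ ≤ Real.exp (θ/2 * Real.log k) * A ^ ((2-θ)/2) * B ^ ((2-θ)/2) := hbil
  have hlog := Real.log_le_log (Real.rpow_pos_of_pos hB_pos _) hkey
  rw [Real.log_rpow hB_pos, Real.log_mul (Real.exp_ne_zero _)
    (Real.rpow_pos_of_pos hA_pos _).ne', Real.log_exp, Real.log_rpow hA_pos] at hlog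
  exact hlog

lemma hasDerivAt_g1 : HasDerivAt (fun t : ℝ => 2/(2-t)) 2 1 := by
  have h := (hasDerivAt_const (1:ℝ) (2:ℝ)).div ((hasDerivAt_id (1:ℝ)).const_sub 2)
    (by norm_num : (2:ℝ) - 1 ≠ 0)
  show HasDerivAt ((fun _ => (2:ℝ)) / fun x => 2 - id x) 2 1
  refine h.congr_deriv ?_
  norm_num

lemma hasDerivAt_powA (a : ℝ) (ha : 0 ≤ a) :
    HasDerivAt (fun t : ℝ => a ^ (2/(2-t))) (a^2 * Real.log (a^2)) 1 := by
  rcases eq_or_lt_of_le ha with h0 | h0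
  · have hev : (fun _ => (0:ℝ)) =ᶠ[nhds (1:ℝ)] (fun t : ℝ => a ^ (2/(2-t))) := by
      filter_upwards [Ioo_mem_nhds (by norm_num : (0:ℝ) < 1) (by norm_num : (1:ℝ) < 2)] with t ht
      rw [← h0, Real.zero_rpow (div_ne_zero two_ne_zero (by simp at ht; linarith))]
    have h2 := (hasDerivAt_const (1:ℝ) (0:ℝ)).congr_of_eventuallyEq hev.symm
    have : a^2 * Real.log (a^2) = 0 := by rw [← h0]; simp
    rw [this]
    exact h2
  · have hg := hasDerivAt_g1.const_mul (Real.log a)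
    have hexp := hg.exp
    have hfun : (fun t : ℝ => a ^ (2/(2-t)))
        = (fun t : ℝ => Real.exp (Real.log a * (2/(2-t)))) :=
      funext fun t => Real.rpow_def_of_pos h0 _
    rw [hfun]
    convert hexp using 1
    rw [show (2:ℝ)/(2-1) = 2 by norm_num]
    rw [← Real.rpow_def_of_pos h0]
    rw [show a ^ (2:ℝ) = a ^ (2:ℕ) by rw [← Real.rpow_natCast a 2]; norm_num]
    rw [Real.log_pow]
    push_cast
    ring

lemma hasDerivAt_g2 : HasDerivAt (fun t : ℝ => 2/t) (-2) 1 := by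
  have h := (hasDerivAt_const (1:ℝ) (2:ℝ)).div (hasDerivAt_id (1:ℝ)) one_ne_zero
  show HasDerivAt ((fun _ => (2:ℝ)) / id) (-2) 1
  refine h.congr_deriv ?_
  norm_num

lemma hasDerivAt_powB (a : ℝ) (ha : 0 ≤ a) :
    HasDerivAt (fun t : ℝ => a ^ (2/t)) (-(a^2 * Real.log (a^2))) 1 := by
  rcases eq_or_lt_of_le ha with h0 | h0
  · have hev : (fun _ => (0:ℝ)) =ᶠ[nhds (1:ℝ)] (fun t : ℝ => a ^ (2/t)) := by
      filter_upwards [Ioo_mem_nhds (by norm_num : (0:ℝ) < 1) (by norm_num : (1:ℝ) < 2)] with t ht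
      rw [← h0, Real.zero_rpow (div_ne_zero two_ne_zero (by simp at ht; linarith))]
    have h2 := (hasDerivAt_const (1:ℝ) (0:ℝ)).congr_of_eventuallyEq hev.symm
    have : -(a^2 * Real.log (a^2)) = 0 := by rw [← h0]; simp
    rw [this]
    exact h2
  · have hg := hasDerivAt_g2.const_mul (Real.log a)
    have hexp := hg.exp
    have hfun : (fun t : ℝ => a ^ (2/t))
        = (fun t : ℝ => Real.exp (Real.log a * (2/t))) :=
      funext fun t => Real.rpow_def_of_pos h0 _
    rw [hfun]
    convert hexp using 1
    rw [show (2:ℝ)/(1:ℝ) = 2 by norm_num]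
    rw [← Real.rpow_def_of_pos h0]
    rw [show a ^ (2:ℝ) = a ^ (2:ℕ) by rw [← Real.rpow_natCast a 2]; norm_num]
    rw [Real.log_pow]
    push_cast
    ring

/-- If `ψ ≤ 0` on `(0,1)`, `ψ 1 = 0` and `ψ` has derivative `D` at `1`, then `D ≥ 0`. -/
lemma deriv_nonneg_of_nonpos_left {ψ : ℝ → ℝ} {D : ℝ}
    (hle : ∀ t, 0 < t → t < 1 → ψ t ≤ 0) (h1 : ψ 1 = 0)
    (hD : HasDerivAt ψ D 1) : 0 ≤ D := by
  have h := (hD.hasDerivWithinAt (s := Set.Iio 1))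
  rw [hasDerivWithinAt_iff_tendsto_slope] at h
  have hne : (Set.Iio (1:ℝ) \ {1}) = Set.Iio 1 := by
    ext t
    simp only [Set.mem_diff, Set.mem_Iio, Set.mem_singleton_iff]
    constructor
    · exact fun h => h.1
    · exact fun h => ⟨h, by linarith⟩
  rw [hne] at h
  refine ge_of_tendsto h ?_
  filter_upwards [Ioo_mem_nhdsLT_of_mem (by constructor <;> norm_num :
    (1:ℝ) ∈ Set.Ioc (0:ℝ) 1)] with t ht
  obtain ⟨ht0, ht1⟩ := ht
  rw [slope_def_field, h1]
  have hψt : ψ t ≤ 0 := hle t ht0 ht1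
  have : (0 - ψ t) / (1 - t) ≥ 0 := by
    apply div_nonneg (by linarith) (by linarith)
  calc (0:ℝ) ≤ (0 - ψ t) / (1 - t) := this
    _ = (ψ t - 0) / (t - 1) := by
        rw [div_eq_div_iff (by linarith) (by linarith)]
        ring

/-- Quantum Hirschman-Beckner uncertainty principle,
commutative finite-dimensional case. -/
theorem quantum_hirschman_beckner {n m : ℕ} (hn : 0 < n) (hm : 0 < m)
    (d : Fin n → ℝ) (τ : Fin m → ℝ) (hd : ∀ i, 0 < d i) (hτ : ∀ j, 0 < τ j)
    (k : ℝ) (hk : 0 < k)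
    (F : (Fin n → ℂ) →ₗ[ℂ] (Fin m → ℂ)) (G : (Fin m → ℂ) →ₗ[ℂ] (Fin n → ℂ))
    (hadj : IsAdjointPair d τ F G)
    (hF1 : ∀ x, inorm (F x) ≤ wnorm d 1 x)
    (hFk : ∀ x, k * inorm x ≤ inorm (G (F x)))
    (hiso : ∀ y, G (F y) = (k : ℂ) • y)
    (x : Fin n → ℂ) (hx : x ≠ 0) :
    went d x / (wnorm d 2 x) ^ 2 + went τ (F x) / (wnorm τ 2 (F x)) ^ 2 ≥
      -Real.log ((wnorm d 2 x) ^ 2) - Real.log ((wnorm τ 2 (F x)) ^ 2) + Real.log k := by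
  classical
  have habsnn : ∀ w : ℂ, 0 ≤ Complex.abs w := fun w => Complex.abs.nonneg w
  have hb1 : ∀ u j, Complex.abs (F u j) ≤ ∑ i, d i * Complex.abs (u i) :=
    fun u j => pointwise_bound hF1 u j
  have hb2 : ∀ u, ∑ j, τ j * Complex.abs (F u j) ^ 2 = k * ∑ i, d i * Complex.abs (u i) ^ 2 :=
    parseval hadj hiso
  have hf : F x ≠ 0 := by
    intro h
    apply hx
    have h2 := hiso x
    rw [h, map_zero] at h2
    have hk' : (k:ℂ) ≠ 0 := by
      simp only [ne_eq, Complex.ofReal_eq_zero]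
      exact hk.ne'
    exact (smul_eq_zero.mp h2.symm).resolve_left hk'
  set N := ∑ i, d i * Complex.abs (x i) ^ 2 with hNdef
  set M := ∑ j, τ j * Complex.abs (F x j) ^ 2 with hMdef
  have hN : 0 < N := by
    obtain ⟨i0, hi0⟩ : ∃ i, x i ≠ 0 := by
      by_contra h
      push_neg at h
      exact hx (funext h)
    refine Finset.sum_pos' (fun i _ => mul_nonneg (hd i).le (pow_nonneg (habsnn _) _))
      ⟨i0, Finset.mem_univ _, ?_⟩
    have : 0 < Complex.abs (x i0) := by simpa [AbsoluteValue.pos_iff] using hi0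
    exact mul_pos (hd i0) (pow_pos this _)
  have hMk : M = k * N := hb2 x
  have hM : 0 < M := by
    rw [hMk]
    exact mul_pos hk hN
  set Af : ℝ → ℝ := fun t => ∑ i, d i * Complex.abs (x i) ^ ((2:ℝ)/(2-t)) with hAfdef
  set Bf : ℝ → ℝ := fun t => ∑ j, τ j * Complex.abs (F x j) ^ ((2:ℝ)/t) with hBfdef
  have hAf1 : Af 1 = N := by
    rw [hAfdef, hNdef]
    refine Finset.sum_congr rfl fun i _ => ?_
    rw [show (2:ℝ)/(2-1) = ((2:ℕ):ℝ) by norm_num, Real.rpow_natCast]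
  have hBf1 : Bf 1 = M := by
    rw [hBfdef, hMdef]
    refine Finset.sum_congr rfl fun j _ => ?_
    rw [show (2:ℝ)/(1:ℝ) = ((2:ℕ):ℝ) by norm_num, Real.rpow_natCast]
  have hAd : HasDerivAt Af
      (∑ i, d i * (Complex.abs (x i)^2 * Real.log (Complex.abs (x i)^2))) 1 :=
    HasDerivAt.fun_sum fun i _ => (hasDerivAt_powA _ (habsnn _)).const_mul (d i)
  have hBd : HasDerivAt Bf
      (∑ j, τ j * (-(Complex.abs (F x j)^2 * Real.log (Complex.abs (F x j)^2)))) 1 :=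
    HasDerivAt.fun_sum fun j _ => (hasDerivAt_powB _ (habsnn _)).const_mul (τ j)
  set DA := ∑ i, d i * (Complex.abs (x i)^2 * Real.log (Complex.abs (x i)^2)) with hDAdef
  set DB := ∑ j, τ j * (-(Complex.abs (F x j)^2 * Real.log (Complex.abs (F x j)^2))) with hDBdef
  have hDA_went : DA = -went d x := by
    rw [went, neg_neg, hDAdef]
    exact Finset.sum_congr rfl fun i _ => by simp only [Complex.abs_apply]; ring
  have hDB_went : DB = went τ (F x) := by
    rw [went, hDBdef, ← Finset.sum_neg_distrib]
    exact Finset.sum_congr rfl fun j _ => by simp only [Complex.abs_apply]; ring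
  set ψ : ℝ → ℝ := fun t => t/2 * Real.log (Bf t) - t/2 * Real.log k
      - (2-t)/2 * Real.log (Af t) with hψdef
  have hψle : ∀ t, 0 < t → t < 1 → ψ t ≤ 0 := by
    intro t ht0 ht1
    have h := HY_log d τ hd hτ k hk F hb1 hb2 x hx hf ht0 ht1
    rw [hψdef]
    simp only
    linarith
  have hψ1 : ψ 1 = 0 := by
    rw [hψdef]
    simp only
    rw [hBf1, hAf1, hMk, Real.log_mul hk.ne' hN.ne']
    ring
  have hlogB : HasDerivAt (fun t => Real.log (Bf t)) (DB / M) 1 := by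
    have := hBd.log (by rw [hBf1]; exact hM.ne')
    rwa [hBf1] at this
  have hlogA : HasDerivAt (fun t => Real.log (Af t)) (DA / N) 1 := by
    have := hAd.log (by rw [hAf1]; exact hN.ne')
    rwa [hAf1] at this
  have hhalf : HasDerivAt (fun t : ℝ => t/2) (1/2) 1 := by
    have := (hasDerivAt_id' (x := (1:ℝ))).div_const 2
    convert this using 1
  have h2half : HasDerivAt (fun t : ℝ => (2-t)/2) (-(1/2)) 1 := by
    have := ((hasDerivAt_id' (x := (1:ℝ))).const_sub 2).div_const 2
    refine this.congr_deriv ?_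
    norm_num
  have hterm1 : HasDerivAt (fun t => t/2 * Real.log (Bf t))
      (1/2 * Real.log M + 1/2 * (DB/M)) 1 := by
    have := hhalf.mul hlogB
    rw [hBf1] at this
    exact this
  have hterm2 : HasDerivAt (fun t : ℝ => t/2 * Real.log k) (1/2 * Real.log k) 1 := by
    have := hhalf.mul_const (Real.log k)
    convert this using 1
  have hterm3 : HasDerivAt (fun t => (2-t)/2 * Real.log (Af t))
      (-(1/2) * Real.log N + 1/2 * (DA/N)) 1 := by
    have := h2half.mul hlogA
    rw [hAf1] at this
    refine this.congr_deriv ?_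
    norm_num
  have hψd : HasDerivAt ψ
      (1/2 * Real.log M + 1/2 * (DB/M) - 1/2 * Real.log k
        - (-(1/2) * Real.log N + 1/2 * (DA/N))) 1 :=
    (hterm1.sub hterm2).sub hterm3
  have hD := deriv_nonneg_of_nonpos_left hψle hψ1 hψd
  rw [hDA_went, hDB_went] at hD
  have hN' : (wnorm d 2 x)^2 = N := by
    rw [wnorm, hNdef]
    simp only [Complex.norm_eq_abs]
    rw [← Real.rpow_natCast ((∑ i, d i * Complex.abs (x i) ^ (2:ℝ)) ^ (1/(2:ℝ))) 2,
      ← Real.rpow_mul (Finset.sum_nonneg fun i _ =>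
        mul_nonneg (hd i).le (Real.rpow_nonneg (habsnn _) _))]
    rw [show (1/(2:ℝ)) * ((2:ℕ):ℝ) = 1 by norm_num, Real.rpow_one]
    refine Finset.sum_congr rfl fun i _ => ?_
    rw [show (2:ℝ) = ((2:ℕ):ℝ) by norm_num, Real.rpow_natCast]
  have hM' : (wnorm τ 2 (F x))^2 = M := by
    rw [wnorm, hMdef]
    simp only [Complex.norm_eq_abs]
    rw [← Real.rpow_natCast ((∑ j, τ j * Complex.abs (F x j) ^ (2:ℝ)) ^ (1/(2:ℝ))) 2,
      ← Real.rpow_mul (Finset.sum_nonneg fun j _ =>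
        mul_nonneg (hτ j).le (Real.rpow_nonneg (habsnn _) _))]
    rw [show (1/(2:ℝ)) * ((2:ℕ):ℝ) = 1 by norm_num, Real.rpow_one]
    refine Finset.sum_congr rfl fun j _ => ?_
    rw [show (2:ℝ) = ((2:ℕ):ℝ) by norm_num, Real.rpow_natCast]
  rw [ge_iff_le, hN', hM']
  rw [neg_div] at hD
  linarith
end
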